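/- arXiv:1804.03046 — 3 statements merged into one kernel-verified Lean document; each statement's English description precedes it below -/
import Mathlib

section
/- For positive reals d, ν, ρ and any k ∈ ℕ, there exist constants C > 0 and ρ₀ > 0 such that for all ρ ∈ (0, ρ₀): |∑_{l=k}^∞ l^d e^{-ρ l^ν} − Γ((d+1)/ν)/ν · ρ^{-(d+1)/ν}| ≤ C · ρ^{-d/ν}. -/
open Real Set MeasureTheory


lemma aux_int {p s b : ℝ} (hp : 0 < p) (hs : -1 < s) (hb : 0 < b) :
    IntegrableOn (fun x : ℝ => x ^ s * Real.exp (-b * x ^ p)) (Ioi 0) := by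
  have h1 : IntegrableOn (fun y : ℝ => y ^ ((s + 1) / p - 1) * Real.exp (-b * y ^ (1:ℝ)))
      (Ioi 0) := integrableOn_rpow_mul_exp_neg_mul_rpow (by
        rw [lt_sub_iff_add_lt]
        simpa using div_pos (by linarith) hp) one_pos hb
  have h2 : IntegrableOn (fun y : ℝ => y ^ ((s + 1) / p - 1) * Real.exp (-b * y)) (Ioi 0) := by
    refine h1.congr_fun (fun x hx => ?_) measurableSet_Ioi
    simp only [Real.rpow_one]
  have h3 := (integrableOn_Ioi_comp_rpow_iff'
      (fun y : ℝ => y ^ ((s + 1) / p - 1) * Real.exp (-b * y)) hp.ne').mpr h2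
  refine h3.congr_fun (fun x hx => ?_) measurableSet_Ioi
  simp only [smul_eq_mul]
  rw [← Real.rpow_mul hx.le, ← mul_assoc, ← Real.rpow_add hx]
  congr 2
  field_simp
  ring

section
open intervalIntegral

lemma aux_cont {s b p : ℝ} {x : ℝ} (hx : x ≠ 0) :
    ContinuousAt (fun x : ℝ => x ^ s * Real.exp (-b * x ^ p)) x :=
  (Real.continuousAt_rpow_const x s (Or.inl hx)).mul
    (Real.continuous_exp.continuousAt.comp
      (continuousAt_const.mul (Real.continuousAt_rpow_const x p (Or.inl hx))))

lemma aux_key {d ν ρ : ℝ} (hd : 0 < d) (hν : 0 < ν) (hρ : 0 < ρ) {a : ℝ} (ha : 1 ≤ a) :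
    |a ^ d * Real.exp (-ρ * a ^ ν) - ∫ x in a..(a+1), x ^ d * Real.exp (-ρ * x ^ ν)| ≤
      ∫ x in a..(a+1), (d * x ^ (d-1) + ρ * ν * x ^ (d+ν-1)) * Real.exp (-ρ * x ^ ν) := by
  set F : ℝ → ℝ := fun x => x ^ d * Real.exp (-ρ * x ^ ν) with hF
  set g : ℝ → ℝ := fun x => (d * x ^ (d-1) + ρ * ν * x ^ (d+ν-1)) * Real.exp (-ρ * x ^ ν) with hg
  set F' : ℝ → ℝ := fun x =>
    d * x ^ (d-1) * Real.exp (-ρ * x ^ ν) +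
      x ^ d * (Real.exp (-ρ * x ^ ν) * (-ρ * (ν * x ^ (ν-1)))) with hF'
  have haa : a ≤ a + 1 := by linarith
  -- continuity
  have hcF : ∀ t s : ℝ, 1 ≤ t → t ≤ s → ContinuousOn F (uIcc t s) := by
    intro t s ht hts
    intro x hx
    rw [uIcc_of_le hts] at hx
    exact (aux_cont (by intro h; rw [h] at hx; linarith [hx.1])).continuousWithinAt
  have hcg : ContinuousOn g (uIcc a (a+1)) := by
    intro x hx
    rw [uIcc_of_le haa] at hx
    have hx0 : x ≠ 0 := by intro h; rw [h] at hx; linarith [hx.1]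
    refine ContinuousWithinAt.mul ?_ ?_
    · exact ((continuousAt_const.mul (Real.continuousAt_rpow_const x _ (Or.inl hx0))).add
        (continuousAt_const.mul (Real.continuousAt_rpow_const x _ (Or.inl hx0)))).continuousWithinAt
    · exact (Real.continuous_exp.continuousAt.comp
        (continuousAt_const.mul (Real.continuousAt_rpow_const x _ (Or.inl hx0)))).continuousWithinAt
  have hcF' : ∀ s : ℝ, a ≤ s → ContinuousOn F' (uIcc a s) := by
    intro s hs x hx
    rw [uIcc_of_le hs] at hx
    have hx0 : x ≠ 0 := by intro h; rw [h] at hx; linarith [hx.1]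
    have h1 : ContinuousAt (fun x : ℝ => Real.exp (-ρ * x ^ ν)) x :=
      Real.continuous_exp.continuousAt.comp
        (continuousAt_const.mul (Real.continuousAt_rpow_const x _ (Or.inl hx0)))
    refine ContinuousWithinAt.add ?_ ?_
    · exact ((continuousAt_const.mul (Real.continuousAt_rpow_const x _ (Or.inl hx0))).mul
        h1).continuousWithinAt
    · exact ((Real.continuousAt_rpow_const x _ (Or.inl hx0)).mul
        (h1.mul (continuousAt_const.mul (continuousAt_const.mul
          (Real.continuousAt_rpow_const x _ (Or.inl hx0)))))).continuousWithinAt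
  have hiF : IntervalIntegrable F volume a (a+1) := (hcF a (a+1) ha haa).intervalIntegrable
  have hig : IntervalIntegrable g volume a (a+1) := hcg.intervalIntegrable
  -- derivative
  have hderiv : ∀ x : ℝ, 0 < x → HasDerivAt F (F' x) x := by
    intro x hx
    have h1 : HasDerivAt (fun x : ℝ => x ^ d) (d * x ^ (d-1)) x :=
      Real.hasDerivAt_rpow_const (Or.inl hx.ne')
    have h2 : HasDerivAt (fun x : ℝ => -ρ * x ^ ν) (-ρ * (ν * x ^ (ν-1))) x :=
      (Real.hasDerivAt_rpow_const (Or.inl hx.ne')).const_mul (-ρ)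
    exact h1.mul h2.exp
  -- |F'| ≤ g on positives
  have habs : ∀ x : ℝ, 0 < x → |F' x| ≤ g x := by
    intro x hx
    have hxle := hx.le
    have e1 : (0:ℝ) ≤ d * x ^ (d-1) * Real.exp (-ρ * x ^ ν) := by positivity
    have e2 : x ^ d * (Real.exp (-ρ * x ^ ν) * (ρ * (ν * x ^ (ν-1)))) =
        ρ * ν * x ^ (d+ν-1) * Real.exp (-ρ * x ^ ν) := by
      rw [show d + ν - 1 = d + (ν - 1) by ring, Real.rpow_add hx]
      ring
    have e3 : (0:ℝ) ≤ ρ * ν * x ^ (d+ν-1) * Real.exp (-ρ * x ^ ν) := by positivity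
    calc |F' x| ≤ |d * x ^ (d-1) * Real.exp (-ρ * x ^ ν)| +
          |x ^ d * (Real.exp (-ρ * x ^ ν) * (-ρ * (ν * x ^ (ν-1))))| := abs_add_le _ _
      _ = d * x ^ (d-1) * Real.exp (-ρ * x ^ ν) + ρ * ν * x ^ (d+ν-1) * Real.exp (-ρ * x ^ ν) := by
          rw [abs_of_nonneg e1]
          congr 1
          rw [show x ^ d * (Real.exp (-ρ * x ^ ν) * (-ρ * (ν * x ^ (ν-1)))) =
            -(x ^ d * (Real.exp (-ρ * x ^ ν) * (ρ * (ν * x ^ (ν-1))))) by ring, abs_neg,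
            e2, abs_of_nonneg e3]
      _ = g x := by rw [hg]; ring
  -- key pointwise bound
  have key : ∀ x ∈ Icc a (a+1), |F x - F a| ≤ ∫ t in a..(a+1), g t := by
    intro x hx
    have hax : a ≤ x := hx.1
    have hFTC : ∫ t in a..x, F' t = F x - F a := by
      refine integral_eq_sub_of_hasDerivAt (fun t ht => ?_) ((hcF' x hax).intervalIntegrable)
      rw [uIcc_of_le hax] at ht
      exact hderiv t (by linarith [ht.1])
    rw [← hFTC]
    calc |∫ t in a..x, F' t| ≤ ∫ t in a..x, |F' t| := abs_integral_le_integral_abs hax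
      _ ≤ ∫ t in a..x, g t := by
          refine integral_mono_on hax ?_ (hig.mono_set ?_) (fun t ht => habs t (by linarith [ht.1]))
          · exact ((hcF' x hax).abs).intervalIntegrable
          · rw [uIcc_of_le hax, uIcc_of_le haa]
            exact Icc_subset_Icc le_rfl (by linarith [hx.2])
      _ ≤ ∫ t in a..(a+1), g t := by
          refine integral_mono_interval le_rfl hax hx.2 ?_ hig
          filter_upwards [ae_restrict_mem measurableSet_Ioc] with t ht
          have ht0 : 0 < t := by linarith [ht.1]
          have := ht0.le
          rw [hg]
          positivity
  -- conclude
  have hsplit : F a - ∫ x in a..(a+1), F x = ∫ x in a..(a+1), (F a - F x) := by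
    rw [integral_sub intervalIntegrable_const hiF, intervalIntegral.integral_const]
    simp
  rw [hsplit]
  calc |∫ x in a..(a+1), (F a - F x)| ≤ ∫ x in a..(a+1), |F a - F x| :=
        abs_integral_le_integral_abs haa
    _ ≤ ∫ x in a..(a+1), (∫ t in a..(a+1), g t) := by
        refine integral_mono_on haa ?_ intervalIntegrable_const (fun x hx => ?_)
        · exact ((continuousOn_const.sub (hcF a (a+1) ha haa)).abs).intervalIntegrable
        · rw [abs_sub_comm]; exact key x hx
    _ = ∫ t in a..(a+1), g t := by rw [intervalIntegral.integral_const]; simp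

end

open Filter Topology

theorem stmt4 (d ν : ℝ) (hd : 0 < d) (hν : 0 < ν) (k : ℕ) :
    ∃ C > 0, ∃ ρ₀ > 0, ∀ ρ ∈ Set.Ioo (0 : ℝ) ρ₀,
      |(∑' l : ℕ, ((k + l : ℕ) : ℝ) ^ d * Real.exp (-ρ * ((k + l : ℕ) : ℝ) ^ ν)) -
        Real.Gamma ((d + 1) / ν) / ν * ρ ^ (-(d + 1) / ν)| ≤ C * ρ ^ (-(d / ν)) := by
  set m : ℕ := max k 1 with hm
  set c : ℝ := (m : ℝ) with hcdef
  have hm1 : 1 ≤ m := le_max_right _ _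
  have hc1 : (1:ℝ) ≤ c := by exact_mod_cast Nat.one_le_cast.mpr hm1
  have hc0 : (0:ℝ) < c := by linarith
  have hΓ1 : 0 < Real.Gamma (d / ν) := Real.Gamma_pos_of_pos (by positivity)
  have hΓ2 : 0 < Real.Gamma ((d + ν) / ν) := Real.Gamma_pos_of_pos (by positivity)
  have hcd : 0 < c ^ d := Real.rpow_pos_of_pos hc0 d
  set C₁ : ℝ := d * (1/ν) * Real.Gamma (d/ν) + Real.Gamma ((d+ν)/ν) with hC₁
  have hC₁0 : 0 < C₁ := by positivity
  refine ⟨C₁ + c * c ^ d, by positivity, 1, one_pos, ?_⟩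
  rintro ρ ⟨hρ0, hρ1⟩
  set F : ℝ → ℝ := fun x => x ^ d * Real.exp (-ρ * x ^ ν) with hFdef
  set g : ℝ → ℝ := fun x => (d * x ^ (d-1) + ρ * ν * x ^ (d+ν-1)) * Real.exp (-ρ * x ^ ν)
    with hgdef
  have hF_int : IntegrableOn F (Ioi 0) := aux_int hν (by linarith) hρ0
  have h1 : IntegrableOn (fun x : ℝ => d * (x ^ (d-1) * Real.exp (-ρ * x ^ ν))) (Ioi 0) :=
    (aux_int hν (by linarith) hρ0).const_mul d
  have h2 : IntegrableOn (fun x : ℝ => (ρ*ν) * (x ^ (d+ν-1) * Real.exp (-ρ * x ^ ν))) (Ioi 0) :=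
    (aux_int hν (by linarith) hρ0).const_mul (ρ*ν)
  have hg_int : IntegrableOn g (Ioi 0) := by
    have h3 : IntegrableOn (fun x : ℝ => d * (x ^ (d-1) * Real.exp (-ρ * x ^ ν)) +
        (ρ*ν) * (x ^ (d+ν-1) * Real.exp (-ρ * x ^ ν))) (Ioi 0) := h1.add h2
    refine h3.congr_fun (fun x hx => ?_) measurableSet_Ioi
    simp only [hgdef]; ring
  have hg_nonneg : ∀ x ∈ Ioi (0:ℝ), 0 ≤ g x := by
    intro x hx
    have hx' : (0:ℝ) ≤ x := le_of_lt hx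
    rw [hgdef]
    positivity
  have hF_nonneg : ∀ x : ℝ, 0 ≤ x → 0 ≤ F x := by
    intro x hx; rw [hFdef]; positivity
  -- value of ∫ g
  have hGval : ∫ x in Ioi (0:ℝ), g x = C₁ * ρ ^ (-(d/ν)) := by
    have e1 := integral_rpow_mul_exp_neg_mul_rpow (q := d-1) hν (by linarith) hρ0
    have e2 := integral_rpow_mul_exp_neg_mul_rpow (q := d+ν-1) hν (by linarith) hρ0
    have hsplit : ∫ x in Ioi (0:ℝ), g x =
        d * (∫ x in Ioi (0:ℝ), x ^ (d-1) * Real.exp (-ρ * x ^ ν)) +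
        (ρ*ν) * (∫ x in Ioi (0:ℝ), x ^ (d+ν-1) * Real.exp (-ρ * x ^ ν)) := by
      rw [← integral_const_mul, ← integral_const_mul, ← integral_add h1 h2]
      exact setIntegral_congr_fun measurableSet_Ioi (fun x hx => by simp only [hgdef]; ring)
    rw [hsplit, e1, e2, show d-1+1 = d by ring, show d+ν-1+1 = d+ν by ring, neg_div, neg_div]
    have h5 : ρ * ρ ^ (-((d+ν)/ν)) = ρ ^ (-(d/ν)) := by
      rw [show -(d/ν) = 1 + -((d+ν)/ν) by field_simp; ring, Real.rpow_add hρ0, Real.rpow_one]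
    rw [hC₁]
    have hν1 : ν * (1/ν) = 1 := mul_one_div_cancel hν.ne'
    linear_combination Real.Gamma ((d+ν)/ν) * (1/ν) * ν * h5 +
      Real.Gamma ((d+ν)/ν) * ρ ^ (-(d/ν)) * hν1
  -- value of ∫ F
  have hIval : ∫ x in Ioi (0:ℝ), F x = Real.Gamma ((d + 1) / ν) / ν * ρ ^ (-(d + 1) / ν) := by
    rw [hFdef, integral_rpow_mul_exp_neg_mul_rpow hν (by linarith) hρ0]
    ring
  -- interval integrability between consecutive points
  have hsub : ∀ n : ℕ, uIcc (c + n) (c + n + 1) ⊆ Ioi (0:ℝ) := by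
    intro n x hx
    rw [uIcc_of_le (by linarith)] at hx
    have : (0:ℝ) ≤ n := n.cast_nonneg
    simp only [mem_Ioi]
    linarith [hx.1]
  have hiF : ∀ n : ℕ, IntervalIntegrable F volume (c + n) (c + n + 1) :=
    fun n => (hF_int.mono_set (hsub n)).intervalIntegrable
  have hig : ∀ n : ℕ, IntervalIntegrable g volume (c + n) (c + n + 1) :=
    fun n => (hg_int.mono_set (hsub n)).intervalIntegrable
  -- adjacency sums
  have hcast : ∀ n : ℕ, c + ((n:ℝ) + 1) = c + n + 1 := fun n => by ring
  have hadjF : ∀ N : ℕ, ∑ n ∈ Finset.range N, ∫ x in (c + n)..(c + n + 1), F x =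
      ∫ x in c..(c + N), F x := by
    intro N
    have := intervalIntegral.sum_integral_adjacent_intervals (a := fun n : ℕ => c + n)
      (f := F) (n := N) (fun i _ => by
        simp only [Nat.cast_add, Nat.cast_one, ← add_assoc]
        exact hiF i)
    simp only [Nat.cast_add, Nat.cast_one, Nat.cast_zero, add_zero, ← add_assoc] at this
    exact this
  have hadjg : ∀ N : ℕ, ∑ n ∈ Finset.range N, ∫ x in (c + n)..(c + n + 1), g x =
      ∫ x in c..(c + N), g x := by
    intro N
    have := intervalIntegral.sum_integral_adjacent_intervals (a := fun n : ℕ => c + n)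
      (f := g) (n := N) (fun i _ => by
        simp only [Nat.cast_add, Nat.cast_one, ← add_assoc]
        exact hig i)
    simp only [Nat.cast_add, Nat.cast_one, Nat.cast_zero, add_zero, ← add_assoc] at this
    exact this
  -- bounding interval integrals by the full integral
  have hmono : ∀ (h : ℝ → ℝ), IntegrableOn h (Ioi 0) → (∀ x ∈ Ioi (0:ℝ), 0 ≤ h x) →
      ∀ N : ℕ, ∫ x in c..(c + N), h x ≤ ∫ x in Ioi (0:ℝ), h x := by
    intro h hint hpos N
    have hcN : c ≤ c + N := by have : (0:ℝ) ≤ (N:ℝ) := Nat.cast_nonneg N; linarith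
    rw [intervalIntegral.integral_of_le hcN]
    refine setIntegral_mono_set hint ?_ ?_
    · filter_upwards [ae_restrict_mem measurableSet_Ioi] with x hx using hpos x hx
    · refine HasSubset.Subset.eventuallyLE ?_
      intro x hx
      simp only [mem_Ioi]
      linarith [hx.1, hx.2]
  -- per-interval estimate
  have hstep : ∀ n : ℕ, |F (c + n) - ∫ x in (c + n)..(c + n + 1), F x| ≤
      ∫ x in (c + n)..(c + n + 1), g x := by
    intro n
    have hn : (0:ℝ) ≤ n := n.cast_nonneg
    have := aux_key hd hν hρ0 (a := c + n) (by linarith)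
    simpa only [add_assoc] using this
  -- partial sum estimate
  have hsum_est : ∀ N : ℕ, |(∑ n ∈ Finset.range N, F (c + n)) - ∫ x in c..(c + N), F x| ≤
      C₁ * ρ ^ (-(d/ν)) := by
    intro N
    rw [← hadjF N, ← Finset.sum_sub_distrib]
    calc |∑ n ∈ Finset.range N, (F (c+n) - ∫ x in (c + n)..(c + n + 1), F x)|
        ≤ ∑ n ∈ Finset.range N, |F (c+n) - ∫ x in (c + n)..(c + n + 1), F x| :=
          Finset.abs_sum_le_sum_abs _ _
      _ ≤ ∑ n ∈ Finset.range N, ∫ x in (c + n)..(c + n + 1), g x :=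
          Finset.sum_le_sum (fun n _ => hstep n)
      _ = ∫ x in c..(c + N), g x := hadjg N
      _ ≤ ∫ x in Ioi (0:ℝ), g x := hmono g hg_int hg_nonneg N
      _ = C₁ * ρ ^ (-(d/ν)) := hGval
  -- summability
  have hterm_nonneg : ∀ n : ℕ, 0 ≤ F (c + n) := by
    intro n
    exact hF_nonneg _ (by have : (0:ℝ) ≤ (n:ℝ) := Nat.cast_nonneg n; linarith)
  have hsummable : Summable (fun n : ℕ => F (c + n)) := by
    refine summable_of_sum_range_le hterm_nonneg (c := (∫ x in Ioi (0:ℝ), F x) + C₁ * ρ^(-(d/ν)))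
      (fun N => ?_)
    have h := hsum_est N
    have h2 := hmono F hF_int (fun x hx => hF_nonneg x (le_of_lt hx)) N
    have := abs_le.mp h
    linarith [this.1]
  -- limits
  have hlim1 : Tendsto (fun N => ∑ n ∈ Finset.range N, F (c + n)) atTop
      (𝓝 (∑' n : ℕ, F (c + n))) := hsummable.hasSum.tendsto_sum_nat
  have hint_c : IntegrableOn F (Ioi c) := hF_int.mono_set (Ioi_subset_Ioi (by linarith))
  have hlim2 : Tendsto (fun N : ℕ => ∫ x in c..(c + N), F x) atTop
      (𝓝 (∫ x in Ioi c, F x)) := by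
    refine intervalIntegral_tendsto_integral_Ioi c hint_c ?_
    exact tendsto_atTop_add_const_left _ c tendsto_natCast_atTop_atTop
  have hdist : |(∑' n : ℕ, F (c + n)) - ∫ x in Ioi c, F x| ≤ C₁ * ρ ^ (-(d/ν)) :=
    le_of_tendsto ((hlim1.sub hlim2).abs) (Eventually.of_forall hsum_est)
  -- tail comparison
  have htail : |(∫ x in Ioi c, F x) - ∫ x in Ioi (0:ℝ), F x| ≤ c * c ^ d := by
    have hunion : Ioc (0:ℝ) c ∪ Ioi c = Ioi 0 := Ioc_union_Ioi_eq_Ioi hc0.le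
    have hi1 : IntegrableOn F (Ioc (0:ℝ) c) := hF_int.mono_set Ioc_subset_Ioi_self
    have hsplit : ∫ x in Ioi (0:ℝ), F x = (∫ x in Ioc (0:ℝ) c, F x) + ∫ x in Ioi c, F x := by
      rw [← hunion, setIntegral_union (Ioc_disjoint_Ioi le_rfl) measurableSet_Ioi hi1 hint_c]
    have hb1 : ∫ x in Ioc (0:ℝ) c, F x ≤ c * c ^ d := by
      have : ∫ x in Ioc (0:ℝ) c, F x ≤ ∫ _x in Ioc (0:ℝ) c, c ^ d := by
        refine setIntegral_mono_on hi1 (integrableOn_const measure_Ioc_lt_top.ne)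
          measurableSet_Ioc (fun x hx => ?_)
        rw [hFdef]
        calc x ^ d * Real.exp (-ρ * x ^ ν) ≤ x ^ d * 1 := by
              refine mul_le_mul_of_nonneg_left ?_ (Real.rpow_nonneg (le_of_lt hx.1) d)
              refine Real.exp_le_one_iff.mpr ?_
              have : (0:ℝ) ≤ x ^ ν := Real.rpow_nonneg (le_of_lt hx.1) ν
              nlinarith
          _ = x ^ d := mul_one _
          _ ≤ c ^ d := Real.rpow_le_rpow (le_of_lt hx.1) hx.2 hd.le
      refine this.trans ?_
      rw [setIntegral_const]
      rw [Real.volume_real_Ioc_of_le hc0.le, smul_eq_mul]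
      simp
    have hb0 : 0 ≤ ∫ x in Ioc (0:ℝ) c, F x :=
      setIntegral_nonneg measurableSet_Ioc (fun x hx => hF_nonneg x (le_of_lt hx.1))
    rw [abs_sub_comm, hsplit]
    rw [abs_of_nonneg (by linarith)]
    linarith
  -- the sum identity
  have hSid : (∑' l : ℕ, ((k + l : ℕ) : ℝ) ^ d * Real.exp (-ρ * ((k + l : ℕ) : ℝ) ^ ν)) =
      ∑' n : ℕ, F (c + n) := by
    rcases Nat.lt_or_ge k 1 with hk | hk
    · have hk0 : k = 0 := Nat.lt_one_iff.mp hk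
      subst hk0
      have hmval : m = 1 := by simp [hm]
      have hs1 : Summable (fun n : ℕ => F ((n:ℝ) + 1)) :=
        hsummable.congr (fun n => congrArg F (by rw [hcdef, hmval]; push_cast; ring))
      have hsFN : Summable (fun n : ℕ => F (n:ℝ)) :=
        (summable_nat_add_iff 1).mp
          (hs1.congr fun n => (congrArg F (by push_cast; ring)).symm)
      calc (∑' l : ℕ, ((0 + l : ℕ) : ℝ) ^ d * Real.exp (-ρ * ((0 + l : ℕ) : ℝ) ^ ν))
          = ∑' l : ℕ, F (l:ℝ) := by
            refine tsum_congr fun l => ?_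
            simp only [Nat.zero_add, hFdef]
        _ = F ((0:ℕ):ℝ) + ∑' n : ℕ, F (((n + 1:ℕ)):ℝ) := hsFN.tsum_eq_zero_add
        _ = ∑' n : ℕ, F (c + n) := by
            have h0 : F ((0:ℕ):ℝ) = 0 := by
              rw [hFdef]; simp [Real.zero_rpow hd.ne']
            rw [h0, zero_add]
            exact tsum_congr fun n => congrArg F (by rw [hcdef, hmval]; push_cast; ring)
    · have hmval : m = k := max_eq_left hk
      refine tsum_congr fun l => ?_
      rw [show c + (l:ℝ) = ((k + l : ℕ):ℝ) by rw [hcdef, hmval]; push_cast; ring, hFdef]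
  -- conclusion
  have hone : (1:ℝ) ≤ ρ ^ (-(d/ν)) := by
    have hdν : (0:ℝ) ≤ d/ν := by positivity
    have := Real.rpow_le_rpow_of_exponent_ge hρ0 hρ1.le (show -(d/ν) ≤ 0 by linarith)
    simpa using this
  rw [hSid, ← hIval]
  calc |(∑' n : ℕ, F (c + n)) - ∫ x in Ioi (0:ℝ), F x|
      ≤ |(∑' n : ℕ, F (c + n)) - ∫ x in Ioi c, F x| +
        |(∫ x in Ioi c, F x) - ∫ x in Ioi (0:ℝ), F x| := abs_sub_le _ _ _
    _ ≤ C₁ * ρ ^ (-(d/ν)) + c * c ^ d := add_le_add hdist htail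
    _ ≤ C₁ * ρ ^ (-(d/ν)) + c * c ^ d * ρ ^ (-(d/ν)) := by
        have h9 : c * c ^ d * 1 ≤ c * c ^ d * ρ ^ (-(d/ν)) :=
          mul_le_mul_of_nonneg_left hone (by positivity)
        linarith
    _ = (C₁ + c * c ^ d) * ρ ^ (-(d/ν)) := by ring
end

section
/- Let Q(l) = l^r + b_{r-1} l^{r-1} + ⋯ + b₀ be a monic polynomial of degree r ≥ 1, and set k = ⌊max_{0 ≤ ι ≤ r-1} |b_ι|⌋ + 1. Then for all real l ≥ 2k(2^{r+1}/r + 1), Q(l) ≥ (l − 2k)^r. -/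
lemma geom_aux10 (l : ℝ) (hl : 2 ≤ l) : ∀ n : ℕ, ∑ i ∈ Finset.range (n+1), l^i ≤ 2 * l^n := by
  intro n
  induction n with
  | zero => norm_num
  | succ n ih =>
      rw [Finset.sum_range_succ]
      have h0 : (0:ℝ) ≤ l ^ n := pow_nonneg (by linarith) n
      have h2 : 2 * l ^ n ≤ l * l ^ n := by nlinarith
      calc (∑ i ∈ Finset.range (n+1), l^i) + l^(n+1) ≤ 2 * l^n + l^(n+1) := by linarith
        _ ≤ 2 * l^(n+1) := by rw [pow_succ]; nlinarith

theorem stmt10 (r : ℕ) (hr : 1 ≤ r) (Q : Polynomial ℝ) (hQ : Q.Monic)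
    (hdeg : Q.natDegree = r) (k : ℤ)
    (hk : k = ⌊(Finset.range r).sup' (Finset.nonempty_range_iff.mpr (by omega))
      (fun ι => |Q.coeff ι|)⌋ + 1) :
    ∀ l : ℝ, 2 * k * (2 ^ (r + 1) / (r : ℝ) + 1) ≤ l →
      (l - 2 * k) ^ r ≤ Q.eval l := by
  intro l hl
  set M : ℝ := (Finset.range r).sup' (Finset.nonempty_range_iff.mpr (by omega))
      (fun ι => |Q.coeff ι|) with hM
  have h0r : 0 ∈ Finset.range r := Finset.mem_range.mpr (by omega)
  have hM0 : 0 ≤ M := le_trans (abs_nonneg (Q.coeff 0))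
    (Finset.le_sup' (fun ι => |Q.coeff ι|) h0r)
  have hk1 : (1:ℝ) ≤ (k:ℝ) := by
    have : (0:ℤ) ≤ ⌊M⌋ := Int.floor_nonneg.mpr hM0
    have : (1:ℤ) ≤ k := by omega
    exact_mod_cast this
  have hcoeff : ∀ ι ∈ Finset.range r, |Q.coeff ι| ≤ (k:ℝ) := by
    intro ι hι
    have h1 : |Q.coeff ι| ≤ M := Finset.le_sup' (fun ι => |Q.coeff ι|) hι
    have h2 : M < (⌊M⌋:ℝ) + 1 := Int.lt_floor_add_one M
    have : (k:ℝ) = (⌊M⌋:ℝ) + 1 := by rw [hk]; push_cast; ring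
    linarith
  have hr0 : (0:ℝ) < r := by exact_mod_cast hr
  have hrpow : (r:ℝ) ≤ 2 ^ r := by exact_mod_cast (Nat.lt_two_pow_self (n := r)).le
  have hc2 : (2:ℝ) ≤ 2 ^ (r+1) / (r:ℝ) := by
    rw [le_div_iff₀ hr0, pow_succ]
    nlinarith
  have hl2k : 2 * (k:ℝ) ≤ l := by nlinarith
  have hl2 : (2:ℝ) ≤ l := by nlinarith
  -- evaluate Q
  have hcoeffr : Q.coeff r = 1 := by rw [← hdeg]; exact hQ.coeff_natDegree
  have heval : Q.eval l = l^r + ∑ i ∈ Finset.range r, Q.coeff i * l^i := by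
    rw [Polynomial.eval_eq_sum_range, hdeg, Finset.sum_range_succ, hcoeffr]
    ring
  obtain ⟨m, rfl⟩ : ∃ m, r = m + 1 := ⟨r - 1, by omega⟩
  have hgeom : ∑ i ∈ Finset.range (m+1), l^i ≤ 2 * l^m := geom_aux10 l hl2 m
  have hlm : (0:ℝ) ≤ l ^ m := pow_nonneg (by linarith) m
  have hsum : |∑ i ∈ Finset.range (m+1), Q.coeff i * l^i| ≤ 2 * (k:ℝ) * l^m := by
    calc |∑ i ∈ Finset.range (m+1), Q.coeff i * l^i|
        ≤ ∑ i ∈ Finset.range (m+1), |Q.coeff i * l^i| :=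
          Finset.abs_sum_le_sum_abs _ _
      _ ≤ ∑ i ∈ Finset.range (m+1), (k:ℝ) * l^i := by
          refine Finset.sum_le_sum fun i hi => ?_
          rw [abs_mul, abs_pow, abs_of_nonneg (by linarith : (0:ℝ) ≤ l)]
          exact mul_le_mul_of_nonneg_right (hcoeff i hi)
            (pow_nonneg (by linarith) i)
      _ = (k:ℝ) * ∑ i ∈ Finset.range (m+1), l^i := (Finset.mul_sum _ _ _).symm
      _ ≤ (k:ℝ) * (2 * l^m) :=
          mul_le_mul_of_nonneg_left hgeom (by linarith)
      _ = 2 * (k:ℝ) * l^m := by ring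
  have hpow : (l - 2*(k:ℝ))^(m+1) ≤ l^(m+1) - 2*(k:ℝ)*l^m := by
    have h0 : 0 ≤ l - 2*(k:ℝ) := by linarith
    calc (l - 2*(k:ℝ))^(m+1) = (l - 2*(k:ℝ)) * (l - 2*(k:ℝ))^m := by ring
      _ ≤ (l - 2*(k:ℝ)) * l^m :=
          mul_le_mul_of_nonneg_left (pow_le_pow_left₀ h0 (by linarith) m) h0
      _ = l^(m+1) - 2*(k:ℝ)*l^m := by ring
  have habs := neg_abs_le (∑ i ∈ Finset.range (m+1), Q.coeff i * l^i)
  rw [heval]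
  linarith
end

section
/- Let q(l) = l^ν + a_{ν-1} l^{ν-1} + ⋯ + a₀ be a monic polynomial of degree ν ≥ 1, positive and increasing for l ≥ 1; let Q(l) = l^r + b_{r-1} l^{r-1} + ⋯ + b₀ be a monic polynomial of degree r ≥ 1, positive for positive l; let d > 0 and p ∈ ℕ. Then there exist C > 0, ρ₀ > 0 such that for all ρ ∈ (0, ρ₀): |∑_{l=1}^∞ l^p Q(l)^d e^{-ρ q(l)} − Γ((p+rd+1)/ν)/ν · ρ^{-(p+rd+1)/ν}| ≤ C ρ^{-(p+rd)/ν}. -/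
open Real MeasureTheory Set Polynomial Filter

lemma aux_poly_abs_bound (P : Polynomial ℝ) (k : ℕ) (hk : P.natDegree ≤ k) :
    ∃ D > 0, ∀ x : ℝ, 1 ≤ x → |P.eval x| ≤ D * x ^ k := by
  refine ⟨(∑ i ∈ Finset.range (k+1), |P.coeff i|) + 1, by positivity, fun x hx => ?_⟩
  have hx0 : (0:ℝ) < x := lt_of_lt_of_le one_pos hx
  have : P.eval x = ∑ i ∈ Finset.range (k+1), P.coeff i * x ^ i := by
    rw [Polynomial.eval_eq_sum_range' (Nat.lt_succ_of_le hk)]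
  rw [this]
  calc |∑ i ∈ Finset.range (k+1), P.coeff i * x ^ i|
      ≤ ∑ i ∈ Finset.range (k+1), |P.coeff i * x ^ i| := Finset.abs_sum_le_sum_abs _ _
    _ ≤ ∑ i ∈ Finset.range (k+1), |P.coeff i| * x ^ k := by
        refine Finset.sum_le_sum fun i hi => ?_
        rw [abs_mul, abs_pow, abs_of_pos hx0]
        exact mul_le_mul_of_nonneg_left
          (pow_le_pow_right₀ hx (Nat.lt_succ_iff.mp (Finset.mem_range.mp hi))) (abs_nonneg _)
    _ = (∑ i ∈ Finset.range (k+1), |P.coeff i|) * x ^ k := by rw [Finset.sum_mul]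
    _ ≤ _ := by nlinarith [pow_pos hx0 k]

lemma aux_sub_pow_deg (P : Polynomial ℝ) (k : ℕ) (hP : P.Monic) (hdeg : P.natDegree = k) :
    (P - Polynomial.X ^ k).natDegree ≤ k - 1 := by
  have hP0 : P ≠ 0 := hP.ne_zero
  rcases eq_or_ne (P - Polynomial.X ^ k) 0 with h | h
  · simp [h]
  · have hd : (P - Polynomial.X ^ k).degree < (P : Polynomial ℝ).degree := by
      refine Polynomial.degree_sub_lt ?_ hP0 ?_
      · rw [degree_eq_natDegree hP0, hdeg, degree_X_pow]
      · rw [hP, Polynomial.monic_X_pow k]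
    rw [degree_eq_natDegree hP0, hdeg] at hd
    have := (Polynomial.natDegree_lt_iff_degree_lt h).mpr hd
    omega

lemma aux_poly_two_sided (P : Polynomial ℝ) (k : ℕ) (hk : 1 ≤ k) (hP : P.Monic)
    (hdeg : P.natDegree = k) (hpos : ∀ x : ℝ, 1 ≤ x → 0 < P.eval x) :
    ∃ c > 0, ∃ M > 0, ∀ x : ℝ, 1 ≤ x → c * x ^ k ≤ P.eval x ∧ P.eval x ≤ M * x ^ k := by
  obtain ⟨M, hM, hMb⟩ := aux_poly_abs_bound P k hdeg.le
  obtain ⟨D, hD, hDb⟩ := aux_poly_abs_bound (P - Polynomial.X ^ k) (k-1)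
    (aux_sub_pow_deg P k hP hdeg)
  set T : ℝ := max 1 (2*D) with hT
  have hT1 : (1:ℝ) ≤ T := le_max_left _ _
  have hcomp : IsCompact (Set.Icc (1:ℝ) T) := isCompact_Icc
  have hne : (Set.Icc (1:ℝ) T).Nonempty := ⟨1, by simp [hT1]⟩
  have hcont : ContinuousOn (fun x : ℝ => P.eval x / x ^ k) (Set.Icc 1 T) := by
    apply ContinuousOn.div (P.continuous_aeval.continuousOn) (by fun_prop)
    intro x hx
    have : (0:ℝ) < x := lt_of_lt_of_le one_pos hx.1
    positivity
  obtain ⟨z, hz, hzmin⟩ := hcomp.exists_isMinOn hne hcont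
  set c₁ : ℝ := P.eval z / z ^ k with hc₁
  have hzpos : (0:ℝ) < z := lt_of_lt_of_le one_pos hz.1
  have hc₁pos : 0 < c₁ := div_pos (hpos z hz.1) (pow_pos hzpos k)
  refine ⟨min c₁ (1/2), by positivity, M, hM, fun x hx => ?_⟩
  have hx0 : (0:ℝ) < x := lt_of_lt_of_le one_pos hx
  constructor
  · rcases le_total x T with hxT | hxT
    · have h1 : c₁ ≤ P.eval x / x ^ k := hzmin ⟨hx, hxT⟩
      have : c₁ * x ^ k ≤ P.eval x := by
        exact (le_div_iff₀ (pow_pos hx0 k)).mp h1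
      calc min c₁ (1/2) * x ^ k ≤ c₁ * x ^ k := by
            apply mul_le_mul_of_nonneg_right (min_le_left _ _) (by positivity)
        _ ≤ P.eval x := this
    · have h2D : 2*D ≤ x := le_trans (le_max_right _ _) hxT
      have hxk : x ^ k = x ^ (k-1) * x := by
        rw [← pow_succ]; congr 1; omega
      have hsub := hDb x hx
      have hPx : P.eval x ≥ x ^ k - D * x ^ (k-1) := by
        have h3 : P.eval x - x ^ k ≥ -(D * x ^ (k-1)) := by
          have := abs_le.mp hsub
          simpa using this.1
        linarith
      have hDx : D * x ^ (k-1) ≤ (1/2) * x ^ k := by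
        rw [hxk]
        have hxp : (0:ℝ) < x ^ (k-1) := pow_pos hx0 _
        nlinarith
      calc min c₁ (1/2) * x ^ k ≤ (1/2) * x ^ k := by
            apply mul_le_mul_of_nonneg_right (min_le_right _ _) (by positivity)
        _ ≤ P.eval x := by linarith
  · calc P.eval x ≤ |P.eval x| := le_abs_self _
      _ ≤ M * x ^ k := hMb x hx

lemma aux_exp_diff (u v : ℝ) :
    |Real.exp (-u) - Real.exp (-v)| ≤ |u - v| * max (Real.exp (-u)) (Real.exp (-v)) := by
  have key : ∀ a b : ℝ, a ≤ b →
      Real.exp (-a) - Real.exp (-b) ≤ (b - a) * Real.exp (-a) := by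
    intro a b hab
    have h1 : Real.exp (-b) = Real.exp (-a) * Real.exp (a - b) := by
      rw [← Real.exp_add]; ring_nf
    rw [h1]
    have h2 : 1 - (b - a) ≤ Real.exp (a - b) := by
      have := Real.add_one_le_exp (a - b); linarith
    nlinarith [Real.exp_pos (-a), Real.exp_pos (a-b)]
  rcases le_total u v with h | h
  · rw [abs_of_nonneg (by simp [Real.exp_le_exp]; linarith)]
    calc Real.exp (-u) - Real.exp (-v) ≤ (v - u) * Real.exp (-u) := key u v h
      _ ≤ |u - v| * max (Real.exp (-u)) (Real.exp (-v)) := by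
        apply mul_le_mul (by rw [abs_sub_comm]; exact le_abs_self _) (le_max_left _ _)
          (Real.exp_pos _).le (abs_nonneg _)
  · rw [abs_of_nonpos (by simp [Real.exp_le_exp]; linarith)]
    calc -(Real.exp (-u) - Real.exp (-v)) = Real.exp (-v) - Real.exp (-u) := by ring
      _ ≤ (u - v) * Real.exp (-v) := key v u h
      _ ≤ |u - v| * max (Real.exp (-u)) (Real.exp (-v)) := by
        apply mul_le_mul (le_abs_self _) (le_max_right _ _) (Real.exp_pos _).le (abs_nonneg _)

lemma aux_rpow_sandwich {a b t e : ℝ} (ha : 0 < a) (hat : a ≤ t) (htb : t ≤ b) :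
    t ^ e ≤ max (a ^ e) (b ^ e) := by
  rcases le_or_gt 0 e with he | he
  · exact le_max_of_le_right (Real.rpow_le_rpow (by linarith) htb he)
  · exact le_max_of_le_left (Real.rpow_le_rpow_of_nonpos ha hat he.le)

lemma aux_rpow_lipschitz {m M d : ℝ} (hm : 0 < m) (hd : 0 < d) {a b : ℝ}
    (ha : a ∈ Set.Icc m M) (hb : b ∈ Set.Icc m M) :
    |a ^ d - b ^ d| ≤ d * max (m ^ (d-1)) (M ^ (d-1)) * |a - b| := by
  have hder : ∀ x ∈ Set.Icc m M, HasDerivWithinAt (fun t : ℝ => t ^ d)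
      (d * x ^ (d-1)) (Set.Icc m M) x := by
    intro x hx
    have hx0 : x ≠ 0 := by intro h; subst h; exact absurd hx.1 (not_le.mpr hm)
    exact (Real.hasDerivAt_rpow_const (Or.inl hx0)).hasDerivWithinAt
  have hbound : ∀ x ∈ Set.Icc m M, ‖d * x ^ (d-1)‖ ≤ d * max (m ^ (d-1)) (M ^ (d-1)) := by
    intro x hx
    rw [norm_mul, Real.norm_eq_abs, Real.norm_eq_abs, abs_of_pos hd,
      abs_of_pos (Real.rpow_pos_of_pos (lt_of_lt_of_le hm hx.1) _)]
    exact mul_le_mul_of_nonneg_left (aux_rpow_sandwich hm hx.1 hx.2) hd.le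
  have := (convex_Icc m M).norm_image_sub_le_of_norm_hasDerivWithin_le hder hbound hb ha
  simpa [Real.norm_eq_abs, abs_sub_comm] using this

lemma aux_master_integrable {ν : ℕ} (hν : 1 ≤ ν) {α b : ℝ} (hα : -1 < α) (hb : 0 < b) :
    IntegrableOn (fun x : ℝ => x ^ α * Real.exp (-b * x ^ (ν:ℝ))) (Set.Ioi 1) := by
  apply (integrableOn_rpow_mul_exp_neg_mul_rpow hα (by exact_mod_cast hν) hb).mono_set
  exact Set.Ioi_subset_Ioi zero_le_one

lemma aux_master_integral {ν : ℕ} (hν : 1 ≤ ν) {α b : ℝ} (hα : -1 < α) (hb : 0 < b) :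
    ∫ x in Set.Ioi (1:ℝ), x ^ α * Real.exp (-b * x ^ (ν:ℝ))
      ≤ b ^ (-(α+1)/(ν:ℝ)) * (1/(ν:ℝ)) * Real.Gamma ((α+1)/(ν:ℝ)) := by
  have h1 : ∫ x in Set.Ioi (1:ℝ), x ^ α * Real.exp (-b * x ^ (ν:ℝ))
      ≤ ∫ x in Set.Ioi (0:ℝ), x ^ α * Real.exp (-b * x ^ (ν:ℝ)) := by
    apply setIntegral_mono_set
      (integrableOn_rpow_mul_exp_neg_mul_rpow hα (by exact_mod_cast hν) hb)
    · filter_upwards [self_mem_ae_restrict measurableSet_Ioi] with x hx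
      have : (0:ℝ) < x := hx
      positivity
    · exact HasSubset.Subset.eventuallyLE (Set.Ioi_subset_Ioi zero_le_one)
  rw [integral_rpow_mul_exp_neg_mul_rpow (by exact_mod_cast hν : (0:ℝ) < ν) hα hb] at h1
  exact h1

set_option maxHeartbeats 4000000 in
theorem stmt13 (ν : ℕ) (hν : 1 ≤ ν) (q : Polynomial ℝ) (hq : q.Monic)
    (hdeg : q.natDegree = ν) (hqpos : ∀ x : ℝ, 1 ≤ x → 0 < q.eval x)
    (hqmono : MonotoneOn q.eval (Set.Ici (1 : ℝ)))
    (r : ℕ) (hr : 1 ≤ r) (Q : Polynomial ℝ) (hQ : Q.Monic)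
    (hQdeg : Q.natDegree = r) (hQpos : ∀ x : ℝ, 0 < x → 0 < Q.eval x)
    (d : ℝ) (hd : 0 < d) (p : ℕ) :
    ∃ C > 0, ∃ ρ₀ > 0, ∀ ρ ∈ Set.Ioo (0 : ℝ) ρ₀,
      |(∑' l : ℕ, ((l + 1 : ℕ) : ℝ) ^ p * (Q.eval ((l + 1 : ℕ) : ℝ)) ^ d *
          Real.exp (-ρ * q.eval ((l + 1 : ℕ) : ℝ))) -
        Real.Gamma ((p + r * d + 1) / ν) / ν * ρ ^ (-(p + r * d + 1) / ν)|
        ≤ C * ρ ^ (-((p + r * d) / ν)) := by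
  have hν0 : (0:ℝ) < (ν:ℝ) := by exact_mod_cast hν
  have hr0 : (0:ℝ) < (r:ℝ) := by exact_mod_cast hr
  -- polynomial bounds
  obtain ⟨cq, hcq, Mq, hMq, hqbnd⟩ := aux_poly_two_sided q ν hν hq hdeg hqpos
  obtain ⟨cQ, hcQ, MQ0, hMQ0, hQbnd⟩ := aux_poly_two_sided Q r hr hQ hQdeg
    (fun x hx => hQpos x (by linarith))
  obtain ⟨Dq', hDq', hDq'b⟩ := aux_poly_abs_bound q.derivative (ν-1)
    (le_trans (Polynomial.natDegree_derivative_le q) (by omega))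
  obtain ⟨DQ', hDQ', hDQ'b⟩ := aux_poly_abs_bound Q.derivative (r-1)
    (le_trans (Polynomial.natDegree_derivative_le Q) (by omega))
  obtain ⟨DqX, hDqX, hDqXb⟩ := aux_poly_abs_bound (q - Polynomial.X ^ ν) (ν-1)
    (aux_sub_pow_deg q ν hq hdeg)
  obtain ⟨DQX, hDQX, hDQXb⟩ := aux_poly_abs_bound (Q - Polynomial.X ^ r) (r-1)
    (aux_sub_pow_deg Q r hQ hQdeg)
  -- constants
  set s : ℝ := (p:ℝ) + (r:ℝ) * d with hs_def
  have hs : 0 < s := by positivity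
  set c₀ : ℝ := min cq 1 with hc₀_def
  have hc₀ : 0 < c₀ := lt_min hcq one_pos
  have hc₀1 : c₀ ≤ 1 := min_le_right _ _
  set mQ : ℝ := min cQ 1 with hmQ_def
  have hmQ : 0 < mQ := lt_min hcQ one_pos
  have hmQ1 : mQ ≤ 1 := min_le_right _ _
  set MQ : ℝ := max MQ0 1 with hMQ_def
  have hMQ : 0 < MQ := lt_of_lt_of_le one_pos (le_max_right _ _)
  have hMQ1 : (1:ℝ) ≤ MQ := le_max_right _ _
  set KQ : ℝ := max (mQ ^ (d-1)) (MQ ^ (d-1)) with hKQ_def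
  have hKQ : 0 < KQ := lt_of_lt_of_le (Real.rpow_pos_of_pos hmQ _) (le_max_left _ _)
  set LQ : ℝ := d * KQ * DQX with hLQ_def
  have hLQ : 0 < LQ := by positivity
  set C₁ : ℝ := (p:ℝ) * MQ ^ d + d * KQ * DQ' with hC₁_def
  have hC₁ : 0 < C₁ := by positivity
  set C₂ : ℝ := Dq' * MQ ^ d with hC₂_def
  have hC₂ : 0 < C₂ := by positivity
  have hΓ1 : 0 < Real.Gamma (s/(ν:ℝ)) := Real.Gamma_pos_of_pos (by positivity)
  have hΓ2 : 0 < Real.Gamma ((s+(ν:ℝ))/(ν:ℝ)) := Real.Gamma_pos_of_pos (by positivity)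
  set E : ℝ → ℝ → ℝ := fun a₁ a₂ =>
    a₁ * (c₀ ^ (-(s/(ν:ℝ))) * (1/(ν:ℝ)) * Real.Gamma (s/(ν:ℝ))) +
    a₂ * (c₀ ^ (-((s+(ν:ℝ))/(ν:ℝ))) * (1/(ν:ℝ)) * Real.Gamma ((s+(ν:ℝ))/(ν:ℝ)))
    with hE_def
  refine ⟨E C₁ C₂ + E LQ DqX + 1, by positivity, 1, one_pos, ?_⟩
  rintro ρ ⟨hρ0, hρ1⟩
  -- definitions of functions
  set g : ℝ → ℝ := fun x => x ^ p * (Q.eval x) ^ d * Real.exp (-ρ * q.eval x) with hg_def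
  set hfun : ℝ → ℝ := fun x => x ^ s * Real.exp (-ρ * x ^ (ν:ℝ)) with hh_def
  -- pointwise estimates
  have pt_Qlo : ∀ x : ℝ, 1 ≤ x → mQ * x ^ (r:ℝ) ≤ Q.eval x := by
    intro x hx
    have hx0 : (0:ℝ) < x := by linarith
    have h1 := (hQbnd x hx).1
    rw [← Real.rpow_natCast x r] at h1
    calc mQ * x ^ (r:ℝ) ≤ cQ * x ^ (r:ℝ) := by
          have := Real.rpow_pos_of_pos hx0 (r:ℝ)
          nlinarith [min_le_left cQ 1]
      _ ≤ Q.eval x := h1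
  have pt_Qhi : ∀ x : ℝ, 1 ≤ x → Q.eval x ≤ MQ * x ^ (r:ℝ) := by
    intro x hx
    have hx0 : (0:ℝ) < x := by linarith
    have h1 := (hQbnd x hx).2
    rw [← Real.rpow_natCast x r] at h1
    calc Q.eval x ≤ MQ0 * x ^ (r:ℝ) := h1
      _ ≤ MQ * x ^ (r:ℝ) := by
          have := Real.rpow_pos_of_pos hx0 (r:ℝ)
          nlinarith [le_max_left MQ0 (1:ℝ)]
  have pt_qlow : ∀ x : ℝ, 1 ≤ x → c₀ * x ^ (ν:ℝ) ≤ q.eval x := by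
    intro x hx
    have hx0 : (0:ℝ) < x := by linarith
    have h1 := (hqbnd x hx).1
    rw [← Real.rpow_natCast x ν] at h1
    calc c₀ * x ^ (ν:ℝ) ≤ cq * x ^ (ν:ℝ) := by
          have := Real.rpow_pos_of_pos hx0 (ν:ℝ)
          nlinarith [min_le_left cq 1]
      _ ≤ q.eval x := h1
  have pt_Qd : ∀ x : ℝ, 1 ≤ x → (Q.eval x) ^ d ≤ MQ ^ d * x ^ ((r:ℝ) * d) := by
    intro x hx
    have hx0 : (0:ℝ) < x := by linarith
    calc (Q.eval x) ^ d ≤ (MQ * x ^ (r:ℝ)) ^ d :=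
          Real.rpow_le_rpow (hQpos x hx0).le (pt_Qhi x hx) hd.le
      _ = MQ ^ d * x ^ ((r:ℝ) * d) := by
          rw [Real.mul_rpow hMQ.le (Real.rpow_nonneg hx0.le _), ← Real.rpow_mul hx0.le]
  have pt_Qd1 : ∀ x : ℝ, 1 ≤ x → (Q.eval x) ^ (d-1) ≤ KQ * x ^ ((r:ℝ) * (d-1)) := by
    intro x hx
    have hx0 : (0:ℝ) < x := by linarith
    have hxr : (0:ℝ) < x ^ (r:ℝ) := Real.rpow_pos_of_pos hx0 _
    have h1 := aux_rpow_sandwich (by positivity : (0:ℝ) < mQ * x ^ (r:ℝ))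
      (pt_Qlo x hx) (pt_Qhi x hx) (e := d - 1)
    refine h1.trans (max_le ?_ ?_)
    · rw [Real.mul_rpow hmQ.le hxr.le, ← Real.rpow_mul hx0.le]
      have := Real.rpow_pos_of_pos hx0 ((r:ℝ)*(d-1))
      nlinarith [le_max_left (mQ ^ (d-1)) (MQ ^ (d-1)), Real.rpow_pos_of_pos hmQ (d-1)]
    · rw [Real.mul_rpow hMQ.le hxr.le, ← Real.rpow_mul hx0.le]
      have := Real.rpow_pos_of_pos hx0 ((r:ℝ)*(d-1))
      nlinarith [le_max_right (mQ ^ (d-1)) (MQ ^ (d-1)), Real.rpow_pos_of_pos hMQ (d-1)]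
  have pt_qX : ∀ x : ℝ, 1 ≤ x → |q.eval x - x ^ (ν:ℝ)| ≤ DqX * x ^ ((ν:ℝ)-1) := by
    intro x hx
    have hx0 : (0:ℝ) < x := by linarith
    have h1 := hDqXb x hx
    simp only [Polynomial.eval_sub, Polynomial.eval_pow, Polynomial.eval_X] at h1
    rw [← Real.rpow_natCast x ν] at h1
    rw [← Real.rpow_natCast x (ν-1), Nat.cast_sub hν, Nat.cast_one] at h1
    exact h1
  have pt_QX : ∀ x : ℝ, 1 ≤ x → |Q.eval x - x ^ (r:ℝ)| ≤ DQX * x ^ ((r:ℝ)-1) := by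
    intro x hx
    have h1 := hDQXb x hx
    simp only [Polynomial.eval_sub, Polynomial.eval_pow, Polynomial.eval_X] at h1
    rw [← Real.rpow_natCast x r] at h1
    rw [← Real.rpow_natCast x (r-1), Nat.cast_sub hr, Nat.cast_one] at h1
    exact h1
  have pt_q' : ∀ x : ℝ, 1 ≤ x → |q.derivative.eval x| ≤ Dq' * x ^ ((ν:ℝ)-1) := by
    intro x hx
    have h1 := hDq'b x hx
    rw [← Real.rpow_natCast x (ν-1), Nat.cast_sub hν, Nat.cast_one] at h1
    exact h1
  have pt_Q' : ∀ x : ℝ, 1 ≤ x → |Q.derivative.eval x| ≤ DQ' * x ^ ((r:ℝ)-1) := by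
    intro x hx
    have h1 := hDQ'b x hx
    rw [← Real.rpow_natCast x (r-1), Nat.cast_sub hr, Nat.cast_one] at h1
    exact h1
  have pt_fdiff : ∀ x : ℝ, 1 ≤ x → |x ^ p * (Q.eval x) ^ d - x ^ s| ≤ LQ * x ^ (s-1) := by
    intro x hx
    have hx0 : (0:ℝ) < x := by linarith
    have hxr : (0:ℝ) < x ^ (r:ℝ) := Real.rpow_pos_of_pos hx0 _
    have hxp : (0:ℝ) < x ^ (p:ℕ) := pow_pos hx0 _
    have hmem1 : Q.eval x ∈ Set.Icc (mQ * x ^ (r:ℝ)) (MQ * x ^ (r:ℝ)) :=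
      ⟨pt_Qlo x hx, pt_Qhi x hx⟩
    have hmem2 : x ^ (r:ℝ) ∈ Set.Icc (mQ * x ^ (r:ℝ)) (MQ * x ^ (r:ℝ)) :=
      ⟨by nlinarith, by nlinarith⟩
    have hmvt := aux_rpow_lipschitz (by positivity : (0:ℝ) < mQ * x ^ (r:ℝ)) hd hmem1 hmem2
    have hmax : max ((mQ * x ^ (r:ℝ)) ^ (d-1)) ((MQ * x ^ (r:ℝ)) ^ (d-1))
        ≤ KQ * x ^ ((r:ℝ) * (d-1)) := by
      apply max_le
      · rw [Real.mul_rpow hmQ.le hxr.le, ← Real.rpow_mul hx0.le]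
        have := Real.rpow_pos_of_pos hx0 ((r:ℝ)*(d-1))
        nlinarith [le_max_left (mQ ^ (d-1)) (MQ ^ (d-1)), Real.rpow_pos_of_pos hmQ (d-1)]
      · rw [Real.mul_rpow hMQ.le hxr.le, ← Real.rpow_mul hx0.le]
        have := Real.rpow_pos_of_pos hx0 ((r:ℝ)*(d-1))
        nlinarith [le_max_right (mQ ^ (d-1)) (MQ ^ (d-1)), Real.rpow_pos_of_pos hMQ (d-1)]
    have hQXd : |(Q.eval x) ^ d - (x ^ (r:ℝ)) ^ d|
        ≤ d * (KQ * x ^ ((r:ℝ)*(d-1))) * (DQX * x ^ ((r:ℝ)-1)) := by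
      calc |(Q.eval x) ^ d - (x ^ (r:ℝ)) ^ d|
          ≤ d * max ((mQ * x ^ (r:ℝ)) ^ (d-1)) ((MQ * x ^ (r:ℝ)) ^ (d-1))
              * |Q.eval x - x ^ (r:ℝ)| := hmvt
        _ ≤ d * (KQ * x ^ ((r:ℝ)*(d-1))) * (DQX * x ^ ((r:ℝ)-1)) := by
            apply mul_le_mul
            · exact mul_le_mul_of_nonneg_left hmax hd.le
            · exact pt_QX x hx
            · exact abs_nonneg _
            · positivity
    have heq1 : x ^ s = x ^ (p:ℕ) * (x ^ (r:ℝ)) ^ d := by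
      rw [← Real.rpow_mul hx0.le, ← Real.rpow_natCast x p, ← Real.rpow_add hx0]
    have heq2 : x ^ (p:ℕ) * (x ^ ((r:ℝ)*(d-1)) * x ^ ((r:ℝ)-1)) = x ^ (s-1) := by
      rw [← Real.rpow_add hx0, ← Real.rpow_natCast x p, ← Real.rpow_add hx0]
      congr 1
      rw [hs_def]; ring
    calc |x ^ p * (Q.eval x) ^ d - x ^ s|
        = x ^ (p:ℕ) * |(Q.eval x) ^ d - (x ^ (r:ℝ)) ^ d| := by
          rw [heq1, ← mul_sub, abs_mul, abs_of_pos hxp]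
      _ ≤ x ^ (p:ℕ) * (d * (KQ * x ^ ((r:ℝ)*(d-1))) * (DQX * x ^ ((r:ℝ)-1))) := by
          exact mul_le_mul_of_nonneg_left hQXd hxp.le
      _ = LQ * (x ^ (p:ℕ) * (x ^ ((r:ℝ)*(d-1)) * x ^ ((r:ℝ)-1))) := by
          rw [hLQ_def]; ring
      _ = LQ * x ^ (s-1) := by rw [heq2]
  have pt_exp : ∀ x : ℝ, 1 ≤ x →
      Real.exp (-ρ * q.eval x) ≤ Real.exp (-(ρ*c₀) * x ^ (ν:ℝ)) := by
    intro x hx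
    apply Real.exp_le_exp.mpr
    have h2 := pt_qlow x hx
    nlinarith [mul_nonneg hρ0.le (sub_nonneg.mpr h2)]
  have pt_expν : ∀ x : ℝ, 1 ≤ x →
      Real.exp (-ρ * x ^ (ν:ℝ)) ≤ Real.exp (-(ρ*c₀) * x ^ (ν:ℝ)) := by
    intro x hx
    have hx0 : (0:ℝ) < x := by linarith
    apply Real.exp_le_exp.mpr
    have h2 := Real.rpow_pos_of_pos hx0 (ν:ℝ)
    nlinarith [mul_nonneg (mul_nonneg hρ0.le (sub_nonneg.mpr hc₀1)) h2.le]
  have pt_expdiff : ∀ x : ℝ, 1 ≤ x →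
      |Real.exp (-ρ * q.eval x) - Real.exp (-ρ * x ^ (ν:ℝ))|
        ≤ ρ * DqX * x ^ ((ν:ℝ)-1) * Real.exp (-(ρ*c₀) * x ^ (ν:ℝ)) := by
    intro x hx
    have h1 := aux_exp_diff (ρ * q.eval x) (ρ * x ^ (ν:ℝ))
    rw [show -(ρ * q.eval x) = -ρ * q.eval x by ring,
      show -(ρ * x ^ (ν:ℝ)) = -ρ * x ^ (ν:ℝ) by ring] at h1
    have h2 : |ρ * q.eval x - ρ * x ^ (ν:ℝ)| ≤ ρ * (DqX * x ^ ((ν:ℝ)-1)) := by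
      rw [← mul_sub, abs_mul, abs_of_pos hρ0]
      exact mul_le_mul_of_nonneg_left (pt_qX x hx) hρ0.le
    have h3 : max (Real.exp (-ρ * q.eval x)) (Real.exp (-ρ * x ^ (ν:ℝ)))
        ≤ Real.exp (-(ρ*c₀) * x ^ (ν:ℝ)) := max_le (pt_exp x hx) (pt_expν x hx)
    calc |Real.exp (-ρ * q.eval x) - Real.exp (-ρ * x ^ (ν:ℝ))|
        ≤ |ρ * q.eval x - ρ * x ^ (ν:ℝ)|
            * max (Real.exp (-ρ * q.eval x)) (Real.exp (-ρ * x ^ (ν:ℝ))) := h1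
      _ ≤ (ρ * (DqX * x ^ ((ν:ℝ)-1))) * Real.exp (-(ρ*c₀) * x ^ (ν:ℝ)) := by
          apply mul_le_mul h2 h3 (le_max_of_le_left (Real.exp_pos _).le) (by positivity)
      _ = ρ * DqX * x ^ ((ν:ℝ)-1) * Real.exp (-(ρ*c₀) * x ^ (ν:ℝ)) := by ring
  -- derivative of g
  set G : ℝ → ℝ := fun x =>
    ((p:ℝ) * x ^ (p-1) * (Q.eval x) ^ d
      + x ^ p * (Q.derivative.eval x * d * (Q.eval x) ^ (d-1))) * Real.exp (-ρ * q.eval x)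
    + x ^ p * (Q.eval x) ^ d * (Real.exp (-ρ * q.eval x) * (-ρ * q.derivative.eval x))
    with hG_def
  have hderiv : ∀ x : ℝ, 0 < x → HasDerivAt g (G x) x := by
    intro x hx0
    have hQx : Q.eval x ≠ 0 := (hQpos x hx0).ne'
    have h1 := (hasDerivAt_pow p x).mul ((Q.hasDerivAt x).rpow_const (p := d) (Or.inl hQx))
    have h2 := ((q.hasDerivAt x).const_mul (-ρ)).exp
    exact h1.mul h2
  -- bound on |G|
  have hGb : ∀ x : ℝ, 1 ≤ x → |G x| ≤
      C₁ * (x ^ (s-1) * Real.exp (-(ρ*c₀) * x ^ (ν:ℝ)))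
        + ρ * C₂ * (x ^ (s+(ν:ℝ)-1) * Real.exp (-(ρ*c₀) * x ^ (ν:ℝ))) := by
    intro x hx
    have hx0 : (0:ℝ) < x := by linarith
    have hxp : (0:ℝ) < x ^ (p:ℕ) := pow_pos hx0 _
    have hQ0 : (0:ℝ) < Q.eval x := hQpos x hx0
    have hQdpos : (0:ℝ) < (Q.eval x) ^ d := Real.rpow_pos_of_pos hQ0 _
    have hQd1pos : (0:ℝ) < (Q.eval x) ^ (d-1) := Real.rpow_pos_of_pos hQ0 _
    have hE0 : (0:ℝ) < Real.exp (-ρ * q.eval x) := Real.exp_pos _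
    have e1 : x ^ (p:ℕ) = x ^ ((p:ℝ)) := (Real.rpow_natCast x p).symm
    have e2 : x ^ ((p:ℝ)-1) * x ^ ((r:ℝ)*d) = x ^ (s-1) := by
      rw [← Real.rpow_add hx0]; congr 1; rw [hs_def]; ring
    have e3 : x ^ ((p:ℝ)) * (x ^ ((r:ℝ)*(d-1)) * x ^ ((r:ℝ)-1)) = x ^ (s-1) := by
      rw [← Real.rpow_add hx0, ← Real.rpow_add hx0]; congr 1; rw [hs_def]; ring
    have e4 : x ^ ((p:ℝ)) * x ^ ((r:ℝ)*d) * x ^ ((ν:ℝ)-1) = x ^ (s+(ν:ℝ)-1) := by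
      rw [← Real.rpow_add hx0, ← Real.rpow_add hx0]; congr 1; rw [hs_def]; ring
    have t1 : (p:ℝ) * x ^ (p-1) * (Q.eval x) ^ d ≤ (p:ℝ) * MQ ^ d * x ^ (s-1) := by
      rcases Nat.eq_zero_or_pos p with hp0 | hp0
      · rw [hp0]; simp
      · have hxpe : (x:ℝ) ^ (p-1:ℕ) = x ^ ((p:ℝ)-1) := by
          rw [← Real.rpow_natCast x (p-1), Nat.cast_sub hp0, Nat.cast_one]
        have hp0' : (0:ℝ) < x ^ ((p:ℝ)-1) := Real.rpow_pos_of_pos hx0 _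
        calc (p:ℝ) * x ^ (p-1) * (Q.eval x) ^ d
            = (p:ℝ) * x ^ ((p:ℝ)-1) * (Q.eval x) ^ d := by rw [hxpe]
          _ ≤ (p:ℝ) * x ^ ((p:ℝ)-1) * (MQ ^ d * x ^ ((r:ℝ)*d)) := by
              apply mul_le_mul_of_nonneg_left (pt_Qd x hx) (by positivity)
          _ = (p:ℝ) * MQ ^ d * (x ^ ((p:ℝ)-1) * x ^ ((r:ℝ)*d)) := by ring
          _ = (p:ℝ) * MQ ^ d * x ^ (s-1) := by rw [e2]
    have t2 : x ^ p * (|Q.derivative.eval x| * d * (Q.eval x) ^ (d-1))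
        ≤ d * KQ * DQ' * x ^ (s-1) := by
      calc x ^ p * (|Q.derivative.eval x| * d * (Q.eval x) ^ (d-1))
          ≤ x ^ p * ((DQ' * x ^ ((r:ℝ)-1)) * d * (KQ * x ^ ((r:ℝ)*(d-1)))) := by
            apply mul_le_mul_of_nonneg_left ?_ hxp.le
            apply mul_le_mul ?_ (pt_Qd1 x hx) hQd1pos.le (by positivity)
            exact mul_le_mul_of_nonneg_right (pt_Q' x hx) hd.le
        _ = d * KQ * DQ' * (x ^ ((p:ℝ)) * (x ^ ((r:ℝ)*(d-1)) * x ^ ((r:ℝ)-1))) := by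
            rw [e1]; ring
        _ = d * KQ * DQ' * x ^ (s-1) := by rw [e3]
    have t3 : x ^ p * (Q.eval x) ^ d * (Real.exp (-ρ * q.eval x) * (ρ * |q.derivative.eval x|))
        ≤ ρ * C₂ * (x ^ (s+(ν:ℝ)-1) * Real.exp (-(ρ*c₀) * x ^ (ν:ℝ))) := by
      calc x ^ p * (Q.eval x) ^ d * (Real.exp (-ρ * q.eval x) * (ρ * |q.derivative.eval x|))
          ≤ x ^ p * (MQ ^ d * x ^ ((r:ℝ)*d))
              * (Real.exp (-(ρ*c₀) * x ^ (ν:ℝ)) * (ρ * (Dq' * x ^ ((ν:ℝ)-1)))) := by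
            apply mul_le_mul
            · exact mul_le_mul_of_nonneg_left (pt_Qd x hx) hxp.le
            · apply mul_le_mul (pt_exp x hx) ?_ (by positivity) (Real.exp_pos _).le
              exact mul_le_mul_of_nonneg_left (pt_q' x hx) hρ0.le
            · positivity
            · positivity
        _ = ρ * C₂ * ((x ^ ((p:ℝ)) * x ^ ((r:ℝ)*d) * x ^ ((ν:ℝ)-1))
              * Real.exp (-(ρ*c₀) * x ^ (ν:ℝ))) := by
            rw [e1, hC₂_def]; ring
        _ = ρ * C₂ * (x ^ (s+(ν:ℝ)-1) * Real.exp (-(ρ*c₀) * x ^ (ν:ℝ))) := by rw [e4]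
    have habs : |G x| ≤
        ((p:ℝ) * x ^ (p-1) * (Q.eval x) ^ d
          + x ^ p * (|Q.derivative.eval x| * d * (Q.eval x) ^ (d-1))) * Real.exp (-ρ * q.eval x)
        + x ^ p * (Q.eval x) ^ d * (Real.exp (-ρ * q.eval x) * (ρ * |q.derivative.eval x|)) := by
      rw [hG_def]
      refine (abs_add_le _ _).trans ?_
      apply add_le_add
      · rw [abs_mul, abs_of_pos hE0]
        apply mul_le_mul_of_nonneg_right ?_ hE0.le
        refine (abs_add_le _ _).trans ?_
        apply add_le_add
        · rw [abs_mul, abs_mul]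
          rw [abs_of_nonneg (by positivity : (0:ℝ) ≤ (p:ℝ)), abs_of_pos (pow_pos hx0 _),
            abs_of_pos hQdpos]
        · rw [abs_mul, abs_of_pos hxp, abs_mul, abs_mul, abs_of_nonneg hd.le,
            abs_of_pos hQd1pos]
      · apply le_of_eq
        simp only [abs_mul, abs_neg]
        rw [abs_of_pos hxp, abs_of_pos hQdpos, abs_of_pos hE0, abs_of_pos hρ0]
    calc |G x| ≤ _ := habs
      _ ≤ ((p:ℝ) * MQ ^ d * x ^ (s-1) + d * KQ * DQ' * x ^ (s-1))
            * Real.exp (-(ρ*c₀) * x ^ (ν:ℝ))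
          + ρ * C₂ * (x ^ (s+(ν:ℝ)-1) * Real.exp (-(ρ*c₀) * x ^ (ν:ℝ))) := by
        apply add_le_add ?_ t3
        apply mul_le_mul (add_le_add t1 t2) (pt_exp x hx) hE0.le
        have := Real.rpow_pos_of_pos hx0 (s-1)
        positivity
      _ = C₁ * (x ^ (s-1) * Real.exp (-(ρ*c₀) * x ^ (ν:ℝ)))
          + ρ * C₂ * (x ^ (s+(ν:ℝ)-1) * Real.exp (-(ρ*c₀) * x ^ (ν:ℝ))) := by
        rw [hC₁_def]; ring
  -- bound on |g|
  have hgb : ∀ x : ℝ, 1 ≤ x →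
      |g x| ≤ MQ ^ d * (x ^ s * Real.exp (-(ρ*c₀) * x ^ (ν:ℝ))) := by
    intro x hx
    have hx0 : (0:ℝ) < x := by linarith
    have hxp : (0:ℝ) < x ^ (p:ℕ) := pow_pos hx0 _
    have hQdpos : (0:ℝ) < (Q.eval x) ^ d := Real.rpow_pos_of_pos (hQpos x hx0) _
    have e1 : x ^ (p:ℕ) = x ^ ((p:ℝ)) := (Real.rpow_natCast x p).symm
    have e2 : x ^ ((p:ℝ)) * x ^ ((r:ℝ)*d) = x ^ s := by
      rw [← Real.rpow_add hx0, hs_def]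
    have hgx : g x = x ^ p * (Q.eval x) ^ d * Real.exp (-ρ * q.eval x) := by rw [hg_def]
    rw [hgx, abs_of_pos (by positivity)]
    calc x ^ p * (Q.eval x) ^ d * Real.exp (-ρ * q.eval x)
        ≤ x ^ p * (MQ ^ d * x ^ ((r:ℝ)*d)) * Real.exp (-(ρ*c₀) * x ^ (ν:ℝ)) := by
          apply mul_le_mul (mul_le_mul_of_nonneg_left (pt_Qd x hx) hxp.le) (pt_exp x hx)
            (Real.exp_pos _).le (by positivity)
      _ = MQ ^ d * ((x ^ ((p:ℝ)) * x ^ ((r:ℝ)*d)) * Real.exp (-(ρ*c₀) * x ^ (ν:ℝ))) := by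
          rw [e1]; ring
      _ = MQ ^ d * (x ^ s * Real.exp (-(ρ*c₀) * x ^ (ν:ℝ))) := by rw [e2]
  -- integral bounds
  have hρc : (0:ℝ) < ρ * c₀ := by positivity
  have hs1 : (-1:ℝ) < s - 1 := by linarith
  have hs2 : (-1:ℝ) < s + (ν:ℝ) - 1 := by linarith
  have hI1 : IntegrableOn (fun x : ℝ => x ^ (s-1) * Real.exp (-(ρ*c₀) * x ^ (ν:ℝ)))
      (Set.Ioi 1) := aux_master_integrable hν hs1 hρc
  have hI2 : IntegrableOn (fun x : ℝ => x ^ (s+(ν:ℝ)-1) * Real.exp (-(ρ*c₀) * x ^ (ν:ℝ)))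
      (Set.Ioi 1) := aux_master_integrable hν hs2 hρc
  have hIs : IntegrableOn (fun x : ℝ => x ^ s * Real.exp (-(ρ*c₀) * x ^ (ν:ℝ)))
      (Set.Ioi 1) := aux_master_integrable hν (by linarith) hρc
  have hJ1 : ∫ x in Set.Ioi (1:ℝ), x ^ (s-1) * Real.exp (-(ρ*c₀) * x ^ (ν:ℝ))
      ≤ (c₀ ^ (-(s/(ν:ℝ))) * (1/(ν:ℝ)) * Real.Gamma (s/(ν:ℝ))) * ρ ^ (-(s/(ν:ℝ))) := by
    have h := aux_master_integral hν hs1 hρc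
    calc ∫ x in Set.Ioi (1:ℝ), x ^ (s-1) * Real.exp (-(ρ*c₀) * x ^ (ν:ℝ))
        ≤ (ρ*c₀) ^ (-(s-1+1)/(ν:ℝ)) * (1/(ν:ℝ)) * Real.Gamma ((s-1+1)/(ν:ℝ)) := h
      _ = (c₀ ^ (-(s/(ν:ℝ))) * (1/(ν:ℝ)) * Real.Gamma (s/(ν:ℝ))) * ρ ^ (-(s/(ν:ℝ))) := by
          rw [show s-1+1 = s by ring, Real.mul_rpow hρ0.le hc₀.le,
            show -s/(ν:ℝ) = -(s/(ν:ℝ)) by ring]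
          ring
  have hJ2 : ρ * ∫ x in Set.Ioi (1:ℝ), x ^ (s+(ν:ℝ)-1) * Real.exp (-(ρ*c₀) * x ^ (ν:ℝ))
      ≤ (c₀ ^ (-((s+(ν:ℝ))/(ν:ℝ))) * (1/(ν:ℝ)) * Real.Gamma ((s+(ν:ℝ))/(ν:ℝ)))
          * ρ ^ (-(s/(ν:ℝ))) := by
    have h := aux_master_integral hν hs2 hρc
    have h2 := mul_le_mul_of_nonneg_left h hρ0.le
    calc ρ * ∫ x in Set.Ioi (1:ℝ), x ^ (s+(ν:ℝ)-1) * Real.exp (-(ρ*c₀) * x ^ (ν:ℝ))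
        ≤ ρ * ((ρ*c₀) ^ (-(s+(ν:ℝ)-1+1)/(ν:ℝ)) * (1/(ν:ℝ))
            * Real.Gamma ((s+(ν:ℝ)-1+1)/(ν:ℝ))) := h2
      _ = (c₀ ^ (-((s+(ν:ℝ))/(ν:ℝ))) * (1/(ν:ℝ)) * Real.Gamma ((s+(ν:ℝ))/(ν:ℝ)))
            * (ρ * ρ ^ (-((s+(ν:ℝ))/(ν:ℝ)))) := by
          rw [show s+(ν:ℝ)-1+1 = s+(ν:ℝ) by ring, Real.mul_rpow hρ0.le hc₀.le,
            show -(s+(ν:ℝ))/(ν:ℝ) = -((s+(ν:ℝ))/(ν:ℝ)) by ring]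
          ring
      _ = (c₀ ^ (-((s+(ν:ℝ))/(ν:ℝ))) * (1/(ν:ℝ)) * Real.Gamma ((s+(ν:ℝ))/(ν:ℝ)))
            * ρ ^ (-(s/(ν:ℝ))) := by
          congr 1
          rw [show (-(s/(ν:ℝ))) = 1 + -((s+(ν:ℝ))/(ν:ℝ)) by field_simp; ring,
            Real.rpow_add hρ0, Real.rpow_one]
  set Bnd : ℝ → ℝ → ℝ → ℝ := fun a₁ a₂ x =>
    a₁ * (x ^ (s-1) * Real.exp (-(ρ*c₀) * x ^ (ν:ℝ)))
      + ρ * a₂ * (x ^ (s+(ν:ℝ)-1) * Real.exp (-(ρ*c₀) * x ^ (ν:ℝ))) with hBnd_def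
  have hBint : ∀ a₁ a₂ : ℝ, IntegrableOn (Bnd a₁ a₂) (Set.Ioi 1) :=
    fun a₁ a₂ => (hI1.const_mul a₁).add (hI2.const_mul (ρ * a₂))
  have hBnonneg : ∀ a₁ a₂ : ℝ, 0 ≤ a₁ → 0 ≤ a₂ → ∀ x : ℝ, 0 < x → 0 ≤ Bnd a₁ a₂ x := by
    intro a₁ a₂ ha₁ ha₂ x hx0
    rw [hBnd_def]
    have h1 := Real.rpow_pos_of_pos hx0 (s-1)
    have h2 := Real.rpow_pos_of_pos hx0 (s+(ν:ℝ)-1)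
    positivity
  have hBval : ∀ a₁ a₂ : ℝ, 0 ≤ a₁ → 0 ≤ a₂ →
      ∫ x in Set.Ioi (1:ℝ), Bnd a₁ a₂ x ≤ E a₁ a₂ * ρ ^ (-(s/(ν:ℝ))) := by
    intro a₁ a₂ ha₁ ha₂
    have hsplit2 : ∫ x in Set.Ioi (1:ℝ), Bnd a₁ a₂ x
        = a₁ * (∫ x in Set.Ioi (1:ℝ), x ^ (s-1) * Real.exp (-(ρ*c₀) * x ^ (ν:ℝ)))
          + (ρ * a₂) * ∫ x in Set.Ioi (1:ℝ), x ^ (s+(ν:ℝ)-1)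
              * Real.exp (-(ρ*c₀) * x ^ (ν:ℝ)) := by
      simp only [hBnd_def]
      rw [integral_add (hI1.const_mul a₁) (hI2.const_mul (ρ * a₂)), integral_const_mul,
        integral_const_mul]
    have h1 := mul_le_mul_of_nonneg_left hJ1 ha₁
    have h2 := mul_le_mul_of_nonneg_left hJ2 ha₂
    rw [hsplit2]
    simp only [hE_def]
    nlinarith [h1, h2]
  -- continuity
  have hQc : ContinuousOn (fun x : ℝ => (Q.eval x) ^ d) (Set.Ici 1) := by
    apply ContinuousOn.rpow_const Q.continuous.continuousOn
    intro x hx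
    exact Or.inl (hQpos x (lt_of_lt_of_le one_pos hx)).ne'
  have hQc1 : ContinuousOn (fun x : ℝ => (Q.eval x) ^ (d-1)) (Set.Ici 1) := by
    apply ContinuousOn.rpow_const Q.continuous.continuousOn
    intro x hx
    exact Or.inl (hQpos x (lt_of_lt_of_le one_pos hx)).ne'
  have hec : Continuous (fun x : ℝ => Real.exp (-ρ * q.eval x)) :=
    Real.continuous_exp.comp (continuous_const.mul q.continuous)
  have hg_cont : ContinuousOn g (Set.Ici 1) := by
    rw [hg_def]
    exact (((continuous_pow p).continuousOn.mul hQc).mul hec.continuousOn)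
  have hG_cont : ContinuousOn G (Set.Ici 1) := by
    rw [hG_def]
    apply ContinuousOn.add
    · apply ContinuousOn.mul ?_ hec.continuousOn
      apply ContinuousOn.add
      · exact (continuous_const.mul (continuous_pow (p-1))).continuousOn.mul hQc
      · apply (continuous_pow p).continuousOn.mul
        exact (Q.derivative.continuous.continuousOn.mul continuousOn_const).mul hQc1
    · apply ContinuousOn.mul ((continuous_pow p).continuousOn.mul hQc)
      exact hec.continuousOn.mul (continuous_const.mul q.derivative.continuous_aeval).continuousOn
  -- integrability of g on Ioi 1
  have hIg : IntegrableOn g (Set.Ioi 1) := by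
    apply Integrable.mono' (hIs.const_mul (MQ ^ d))
      ((hg_cont.mono (Set.Ioi_subset_Ici le_rfl)).aestronglyMeasurable measurableSet_Ioi)
    filter_upwards [self_mem_ae_restrict measurableSet_Ioi] with x hx
    exact hgb x (le_of_lt hx)
  -- summability
  have hgpos : ∀ x : ℝ, 1 ≤ x → 0 ≤ g x := by
    intro x hx
    have hx0 : (0:ℝ) < x := by linarith
    have hQdp := Real.rpow_pos_of_pos (hQpos x hx0) d
    rw [hg_def]
    positivity
  have hsummable : Summable (fun l : ℕ => g ((l:ℝ)+1)) := by
    have hw : ‖Real.exp (-(ρ*c₀))‖ < 1 := by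
      rw [Real.norm_eq_abs, abs_of_pos (Real.exp_pos _)]
      exact Real.exp_lt_one_iff.mpr (neg_lt_zero.mpr hρc)
    have hsum0 : Summable (fun n : ℕ => (n:ℝ) ^ (p + r * ⌈d⌉₊) * Real.exp (-(ρ*c₀)) ^ n) :=
      summable_pow_mul_geometric_of_norm_lt_one (p + r * ⌈d⌉₊) hw
    have hsum1 : Summable (fun n : ℕ =>
        ((n+1:ℕ):ℝ) ^ (p + r * ⌈d⌉₊) * Real.exp (-(ρ*c₀)) ^ (n+1)) :=
      (summable_nat_add_iff 1).mpr hsum0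
    apply Summable.of_nonneg_of_le
      (fun l => hgpos _ (by linarith [Nat.cast_nonneg (α := ℝ) l]))
      ?_ (hsum1.mul_left (MQ ^ d))
    intro l
    have hy1 : 1 ≤ (l:ℝ) + 1 := by linarith [Nat.cast_nonneg (α := ℝ) l]
    have hy0 : (0:ℝ) < (l:ℝ) + 1 := by linarith
    have h1 : g ((l:ℝ)+1) ≤ MQ ^ d * (((l:ℝ)+1) ^ s
        * Real.exp (-(ρ*c₀) * ((l:ℝ)+1) ^ (ν:ℝ))) := by
      have h := hgb ((l:ℝ)+1) hy1; rwa [abs_of_nonneg (hgpos _ hy1)] at h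
    have h2 : ((l:ℝ)+1) ^ s ≤ ((l:ℝ)+1) ^ (p + r * ⌈d⌉₊ : ℕ) := by
      rw [← Real.rpow_natCast ((l:ℝ)+1) (p + r * ⌈d⌉₊)]
      apply Real.rpow_le_rpow_of_exponent_le hy1
      push_cast
      have hdc := Nat.le_ceil d
      have h7 : (r:ℝ) * d ≤ (r:ℝ) * (⌈d⌉₊:ℝ) :=
        mul_le_mul_of_nonneg_left hdc (by positivity)
      rw [hs_def]; linarith
    have h3 : Real.exp (-(ρ*c₀) * ((l:ℝ)+1) ^ (ν:ℝ)) ≤ Real.exp (-(ρ*c₀)) ^ (l+1) := by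
      rw [← Real.exp_nat_mul]
      apply Real.exp_le_exp.mpr
      have hyy : (l:ℝ)+1 ≤ ((l:ℝ)+1) ^ (ν:ℝ) := by
        nth_rewrite 1 [← Real.rpow_one ((l:ℝ)+1)]
        exact Real.rpow_le_rpow_of_exponent_le hy1 (by exact_mod_cast hν)
      have h8 : (ρ*c₀) * ((l:ℝ)+1) ≤ (ρ*c₀) * (((l:ℝ)+1) ^ (ν:ℝ)) :=
        mul_le_mul_of_nonneg_left hyy hρc.le
      push_cast
      linarith [h8]
    have hexp_pos : (0:ℝ) < Real.exp (-(ρ*c₀) * ((l:ℝ)+1) ^ (ν:ℝ)) := Real.exp_pos _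
    calc g ((l:ℝ)+1)
        ≤ MQ ^ d * (((l:ℝ)+1) ^ s * Real.exp (-(ρ*c₀) * ((l:ℝ)+1) ^ (ν:ℝ))) := h1
      _ ≤ MQ ^ d * (((l:ℝ)+1) ^ (p + r * ⌈d⌉₊ : ℕ) * Real.exp (-(ρ*c₀)) ^ (l+1)) := by
          apply mul_le_mul_of_nonneg_left ?_ (by positivity)
          apply mul_le_mul h2 h3 hexp_pos.le (by positivity)
      _ = MQ ^ d * (((l+1:ℕ):ℝ) ^ (p + r * ⌈d⌉₊ : ℕ) * Real.exp (-(ρ*c₀)) ^ (l+1)) := by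
          push_cast; ring
  have hsum_eq : (∑' l : ℕ, ((l + 1 : ℕ) : ℝ) ^ p * (Q.eval ((l + 1 : ℕ) : ℝ)) ^ d *
      Real.exp (-ρ * q.eval ((l + 1 : ℕ) : ℝ))) = ∑' l : ℕ, g ((l:ℝ)+1) := by
    apply tsum_congr
    intro l
    simp only [hg_def]
    push_cast
    ring_nf
  have hmain : Real.Gamma ((s + 1) / (ν:ℝ)) / (ν:ℝ) * ρ ^ (-(s + 1) / (ν:ℝ))
      = ∫ x in Set.Ioi (0:ℝ), hfun x := by
    simp only [hh_def]
    rw [integral_rpow_mul_exp_neg_mul_rpow hν0 (by linarith : (-1:ℝ) < s) hρ0]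
    ring
  -- part A : sum vs integral
  set aSeq : ℕ → ℝ := fun k => (k:ℝ) + 1 with haSeq_def
  have haSeq1 : ∀ k : ℕ, 1 ≤ aSeq k := by
    intro k; simp only [haSeq_def]; linarith [Nat.cast_nonneg (α := ℝ) k]
  have haSeqle : ∀ k : ℕ, aSeq k ≤ aSeq (k+1) := by
    intro k; simp only [haSeq_def]; push_cast; linarith
  have hsubIci : ∀ k : ℕ, Set.uIcc (aSeq k) (aSeq (k+1)) ⊆ Set.Ici 1 := by
    intro k
    rw [Set.uIcc_of_le (haSeqle k)]
    exact fun x hx => le_trans (haSeq1 k) hx.1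
  have hintg : ∀ k : ℕ, IntervalIntegrable g volume (aSeq k) (aSeq (k+1)) :=
    fun k => (hg_cont.mono (hsubIci k)).intervalIntegrable
  have hintG : ∀ k : ℕ, IntervalIntegrable (fun x => |G x|) volume (aSeq k) (aSeq (k+1)) :=
    fun k => ((hG_cont.mono (hsubIci k)).abs).intervalIntegrable
  have key2 : ∀ k : ℕ, |g (aSeq k) - ∫ x in (aSeq k)..(aSeq (k+1)), g x|
      ≤ ∫ x in (aSeq k)..(aSeq (k+1)), |G x| := by
    intro k
    set A := aSeq k with hA_def
    set B := aSeq (k+1) with hB_def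
    have hA1 : 1 ≤ A := haSeq1 k
    have hAB : B = A + 1 := by simp only [hA_def, hB_def, haSeq_def]; push_cast; ring
    have hABle : A ≤ B := haSeqle k
    have hsubA : ∀ y : ℝ, A ≤ y → y ≤ B → Set.uIcc A y ⊆ Set.Ici 1 := by
      intro y h1 h2
      rw [Set.uIcc_of_le h1]
      exact fun x hx => le_trans hA1 hx.1
    have hintGAy : ∀ y : ℝ, A ≤ y → y ≤ B → IntervalIntegrable (fun x => |G x|) volume A y :=
      fun y h1 h2 => ((hG_cont.mono (hsubA y h1 h2)).abs).intervalIntegrable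
    have hftc : ∀ y : ℝ, y ∈ Set.Icc A B → g y - g A = ∫ t in A..y, G t := by
      intro y hy
      refine (intervalIntegral.integral_eq_sub_of_hasDerivAt ?_
        ((hG_cont.mono (hsubA y hy.1 hy.2)).intervalIntegrable)).symm
      intro t ht
      rw [Set.uIcc_of_le hy.1] at ht
      exact hderiv t (by linarith [ht.1])
    have hbd : ∀ y ∈ Set.uIoc A B, ‖g A - g y‖ ≤ ∫ x in A..B, |G x| := by
      intro y hy
      rw [Set.uIoc_of_le hABle] at hy
      rw [Real.norm_eq_abs, abs_sub_comm, hftc y ⟨hy.1.le, hy.2⟩]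
      calc |∫ t in A..y, G t| ≤ ∫ t in A..y, |G t| :=
            intervalIntegral.abs_integral_le_integral_abs hy.1.le
        _ ≤ ∫ t in A..B, |G t| := by
            have hsub2 : Set.uIcc y B ⊆ Set.Ici 1 := by
              rw [Set.uIcc_of_le hy.2]
              exact fun x hx => le_trans hA1 (le_trans hy.1.le hx.1)
            rw [← intervalIntegral.integral_add_adjacent_intervals
              (hintGAy y hy.1.le hy.2) ((hG_cont.mono hsub2).abs.intervalIntegrable)]
            have h0 : 0 ≤ ∫ t in y..B, |G t| :=
              intervalIntegral.integral_nonneg hy.2 (fun _ _ => abs_nonneg _)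
            linarith
    have heq : g A - ∫ x in A..B, g x = ∫ x in A..B, (g A - g x) := by
      rw [intervalIntegral.integral_sub intervalIntegrable_const (hintg k),
        intervalIntegral.integral_const, smul_eq_mul,
        show B - A = 1 by rw [hAB]; ring, one_mul]
    rw [heq]
    have h5 := intervalIntegral.norm_integral_le_of_norm_le_const hbd
    rw [Real.norm_eq_abs] at h5
    calc |∫ x in A..B, (g A - g x)| ≤ (∫ x in A..B, |G x|) * |B - A| := h5
      _ = ∫ x in A..B, |G x| := by rw [hAB]; simp
  have hpartial : ∀ N : ℕ, |(∑ l ∈ Finset.range N, g (aSeq l)) - ∫ x in (1:ℝ)..(aSeq N), g x|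
      ≤ E C₁ C₂ * ρ ^ (-(s/(ν:ℝ))) := by
    intro N
    have hsum1 : ∑ l ∈ Finset.range N, ∫ x in (aSeq l)..(aSeq (l+1)), g x
        = ∫ x in (aSeq 0)..(aSeq N), g x :=
      intervalIntegral.sum_integral_adjacent_intervals (fun k _ => hintg k)
    have hsum2 : ∑ l ∈ Finset.range N, ∫ x in (aSeq l)..(aSeq (l+1)), |G x|
        = ∫ x in (aSeq 0)..(aSeq N), |G x| :=
      intervalIntegral.sum_integral_adjacent_intervals (fun k _ => hintG k)
    have haSeq0 : aSeq 0 = (1:ℝ) := by simp [haSeq_def]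
    calc |(∑ l ∈ Finset.range N, g (aSeq l)) - ∫ x in (1:ℝ)..(aSeq N), g x|
        = |∑ l ∈ Finset.range N, (g (aSeq l) - ∫ x in (aSeq l)..(aSeq (l+1)), g x)| := by
          rw [Finset.sum_sub_distrib, hsum1, haSeq0]
      _ ≤ ∑ l ∈ Finset.range N, |g (aSeq l) - ∫ x in (aSeq l)..(aSeq (l+1)), g x| :=
          Finset.abs_sum_le_sum_abs _ _
      _ ≤ ∑ l ∈ Finset.range N, ∫ x in (aSeq l)..(aSeq (l+1)), |G x| :=
          Finset.sum_le_sum (fun l _ => key2 l)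
      _ = ∫ x in (aSeq 0)..(aSeq N), |G x| := hsum2
      _ ≤ E C₁ C₂ * ρ ^ (-(s/(ν:ℝ))) := by
          rw [haSeq0, intervalIntegral.integral_of_le (haSeq1 N)]
          have hGIoc : IntegrableOn (fun x => |G x|) (Set.Ioc 1 (aSeq N)) :=
            (((hG_cont.mono Set.Icc_subset_Ici_self).abs).integrableOn_Icc).mono_set
              Set.Ioc_subset_Icc_self
          have hBIoc : IntegrableOn (Bnd C₁ C₂) (Set.Ioc 1 (aSeq N)) :=
            (hBint C₁ C₂).mono_set Set.Ioc_subset_Ioi_self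
          calc ∫ x in Set.Ioc 1 (aSeq N), |G x|
              ≤ ∫ x in Set.Ioc 1 (aSeq N), Bnd C₁ C₂ x := by
                apply setIntegral_mono_on hGIoc hBIoc measurableSet_Ioc
                intro x hx
                have h6 := hGb x hx.1.le
                simp only [hBnd_def]
                exact h6
            _ ≤ ∫ x in Set.Ioi 1, Bnd C₁ C₂ x := by
                apply setIntegral_mono_set (hBint C₁ C₂) ?_
                  (HasSubset.Subset.eventuallyLE Set.Ioc_subset_Ioi_self)
                filter_upwards [self_mem_ae_restrict measurableSet_Ioi] with x hx
                exact hBnonneg C₁ C₂ hC₁.le hC₂.le x (lt_trans one_pos hx)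
            _ ≤ E C₁ C₂ * ρ ^ (-(s/(ν:ℝ))) := hBval C₁ C₂ hC₁.le hC₂.le
  have hS : Filter.Tendsto (fun N : ℕ => ∑ l ∈ Finset.range N, g (aSeq l)) Filter.atTop
      (nhds (∑' l : ℕ, g ((l:ℝ)+1))) := by
    have h := hsummable.hasSum.tendsto_sum_nat
    simpa only [haSeq_def] using h
  have hIto : Filter.Tendsto (fun N : ℕ => ∫ x in (1:ℝ)..(aSeq N), g x) Filter.atTop
      (nhds (∫ x in Set.Ioi 1, g x)) := by
    apply intervalIntegral_tendsto_integral_Ioi 1 hIg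
    simp only [haSeq_def]
    exact Filter.tendsto_atTop_add_const_right _ 1 tendsto_natCast_atTop_atTop
  have hA : |(∑' l : ℕ, g ((l:ℝ)+1)) - ∫ x in Set.Ioi 1, g x|
      ≤ E C₁ C₂ * ρ ^ (-(s/(ν:ℝ))) := by
    apply le_of_tendsto ((hS.sub hIto).abs)
    exact Filter.Eventually.of_forall hpartial
  -- part B
  have hIh0 : IntegrableOn hfun (Set.Ioi 0) := by
    simp only [hh_def]
    exact integrableOn_rpow_mul_exp_neg_mul_rpow (by linarith) (by exact_mod_cast hν) hρ0
  have hIh1 : IntegrableOn hfun (Set.Ioi 1) := hIh0.mono_set (Set.Ioi_subset_Ioi zero_le_one)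
  have hIh01 : IntegrableOn hfun (Set.Ioc 0 1) := hIh0.mono_set Set.Ioc_subset_Ioi_self
  have hBpt : ∀ x : ℝ, 1 ≤ x → |g x - hfun x| ≤ Bnd LQ DqX x := by
    intro x hx
    have hx0 : (0:ℝ) < x := by linarith
    have e5 : x ^ s * x ^ ((ν:ℝ)-1) = x ^ (s+(ν:ℝ)-1) := by
      rw [← Real.rpow_add hx0]
      congr 1
      ring
    have hdecomp : g x - hfun x = (x ^ p * (Q.eval x) ^ d - x ^ s) * Real.exp (-ρ * q.eval x)
        + x ^ s * (Real.exp (-ρ * q.eval x) - Real.exp (-ρ * x ^ (ν:ℝ))) := by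
      simp only [hg_def, hh_def]; ring
    rw [hdecomp]
    simp only [hBnd_def]
    have hxs : (0:ℝ) < x ^ s := Real.rpow_pos_of_pos hx0 _
    calc |(x ^ p * (Q.eval x) ^ d - x ^ s) * Real.exp (-ρ * q.eval x)
          + x ^ s * (Real.exp (-ρ * q.eval x) - Real.exp (-ρ * x ^ (ν:ℝ)))|
        ≤ |x ^ p * (Q.eval x) ^ d - x ^ s| * Real.exp (-ρ * q.eval x)
          + x ^ s * |Real.exp (-ρ * q.eval x) - Real.exp (-ρ * x ^ (ν:ℝ))| := by
          refine (abs_add_le _ _).trans ?_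
          rw [abs_mul, abs_mul, abs_of_pos (Real.exp_pos _), abs_of_pos hxs]
      _ ≤ (LQ * x ^ (s-1)) * Real.exp (-(ρ*c₀) * x ^ (ν:ℝ))
          + x ^ s * (ρ * DqX * x ^ ((ν:ℝ)-1) * Real.exp (-(ρ*c₀) * x ^ (ν:ℝ))) := by
          apply add_le_add
          · exact mul_le_mul (pt_fdiff x hx) (pt_exp x hx) (Real.exp_pos _).le (by positivity)
          · exact mul_le_mul_of_nonneg_left (pt_expdiff x hx) hxs.le
      _ = LQ * (x ^ (s-1) * Real.exp (-(ρ*c₀) * x ^ (ν:ℝ)))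
          + ρ * DqX * ((x ^ s * x ^ ((ν:ℝ)-1)) * Real.exp (-(ρ*c₀) * x ^ (ν:ℝ))) := by ring
      _ = _ := by rw [e5]
  have hB : |(∫ x in Set.Ioi 1, g x) - ∫ x in Set.Ioi (1:ℝ), hfun x|
      ≤ E LQ DqX * ρ ^ (-(s/(ν:ℝ))) := by
    rw [← integral_sub hIg hIh1]
    calc |∫ x in Set.Ioi 1, (g x - hfun x)| ≤ ∫ x in Set.Ioi 1, Bnd LQ DqX x := by
          rw [← Real.norm_eq_abs]
          apply norm_integral_le_of_norm_le (hBint LQ DqX)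
          filter_upwards [self_mem_ae_restrict measurableSet_Ioi] with x hx
          rw [Real.norm_eq_abs]
          exact hBpt x (le_of_lt hx)
      _ ≤ E LQ DqX * ρ ^ (-(s/(ν:ℝ))) := hBval LQ DqX hLQ.le hDqX.le
  -- part C
  have hCpt : ∀ x ∈ Set.Ioc (0:ℝ) 1, hfun x ≤ 1 := by
    intro x hx
    simp only [hh_def]
    have h1 : x ^ s ≤ 1 := Real.rpow_le_one hx.1.le hx.2 hs.le
    have h2 : Real.exp (-ρ * x ^ (ν:ℝ)) ≤ 1 := by
      apply Real.exp_le_one_iff.mpr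
      rw [neg_mul, neg_nonpos]
      exact mul_nonneg hρ0.le (Real.rpow_pos_of_pos hx.1 _).le
    have h3 : (0:ℝ) ≤ x ^ s := (Real.rpow_pos_of_pos hx.1 _).le
    nlinarith [h1, h2, h3, Real.exp_pos (-ρ * x ^ (ν:ℝ))]
  have hCnn : 0 ≤ ∫ x in Set.Ioc (0:ℝ) 1, hfun x := by
    apply setIntegral_nonneg measurableSet_Ioc
    intro x hx
    simp only [hh_def]
    exact mul_nonneg (Real.rpow_nonneg hx.1.le _) (Real.exp_pos _).le
  have hC : |∫ x in Set.Ioc (0:ℝ) 1, hfun x| ≤ 1 := by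
    rw [abs_of_nonneg hCnn]
    calc ∫ x in Set.Ioc (0:ℝ) 1, hfun x ≤ ∫ x in Set.Ioc (0:ℝ) 1, (1:ℝ) :=
          setIntegral_mono_on hIh01 (integrableOn_const measure_Ioc_lt_top.ne)
            measurableSet_Ioc hCpt
      _ = 1 := by simp
  have hsplit : ∫ x in Set.Ioi (0:ℝ), hfun x
      = (∫ x in Set.Ioc (0:ℝ) 1, hfun x) + ∫ x in Set.Ioi (1:ℝ), hfun x := by
    rw [← setIntegral_union (Set.Ioc_disjoint_Ioi le_rfl) measurableSet_Ioi hIh01 hIh1,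
      Set.Ioc_union_Ioi_eq_Ioi zero_le_one]
  have hρpow1 : (1:ℝ) ≤ ρ ^ (-(s/(ν:ℝ))) :=
    Real.one_le_rpow_of_pos_of_le_one_of_nonpos hρ0 hρ1.le (by rw [neg_nonpos]; positivity)
  -- assembly
  rw [hsum_eq, hmain, hsplit]
  have hfinal : |(∑' l : ℕ, g ((l:ℝ)+1))
        - ((∫ x in Set.Ioc (0:ℝ) 1, hfun x) + ∫ x in Set.Ioi (1:ℝ), hfun x)|
      ≤ |(∑' l : ℕ, g ((l:ℝ)+1)) - ∫ x in Set.Ioi 1, g x|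
        + |(∫ x in Set.Ioi 1, g x) - ∫ x in Set.Ioi (1:ℝ), hfun x|
        + |∫ x in Set.Ioc (0:ℝ) 1, hfun x| := by
    have h1 : (∑' l : ℕ, g ((l:ℝ)+1))
        - ((∫ x in Set.Ioc (0:ℝ) 1, hfun x) + ∫ x in Set.Ioi (1:ℝ), hfun x)
        = (((∑' l : ℕ, g ((l:ℝ)+1)) - ∫ x in Set.Ioi 1, g x)
          + ((∫ x in Set.Ioi 1, g x) - ∫ x in Set.Ioi (1:ℝ), hfun x))
          + (-(∫ x in Set.Ioc (0:ℝ) 1, hfun x)) := by ring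
    rw [h1]
    refine (abs_add_le _ _).trans ?_
    rw [abs_neg]
    exact add_le_add_left (abs_add_le _ _) _
  refine hfinal.trans ?_
  have hcomb := add_le_add (add_le_add hA hB) hC
  refine hcomb.trans ?_
  linarith [hρpow1]
end
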